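/- arXiv:1907.09067 — 14 statements merged into one kernel-verified Lean document; each statement's English description precedes it below -/
import Mathlib

section
/- Let X be a metric space. For any 0 < α ≤ 1/2, the snowflaked space (X, d^α) satisfies the ⊠-inequalities: for all t, s ∈ [0,1] and all x, y, z, w ∈ X, 0 ≤ (1-t)(1-s) d(x,y)^{2α} + t(1-s) d(y,z)^{2α} + ts d(z,w)^{2α} + (1-t)s d(w,x)^{2α} - t(1-t) d(x,z)^{2α} - s(1-s) d(y,w)^{2α}. -/
/-!
Since `2α ≤ 1`, `d ^ (2α)` is again a metric (the `2α`-snowflaking of `X`), so it suffices to show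
that every metric `ρ` satisfies the ⊠-inequalities with `ρ` in place of `d²`. The ⊠-expression is
invariant under `t ↦ 1 - t` (swapping `x` and `z`), under `s ↦ 1 - s` (swapping `y` and `w`) and
under exchanging `t` and `s` (relabelling the quadrilateral), so we may assume `t ≤ s ≤ 1/2`.
There the expression is an explicit nonnegative combination of the four triangle inequalities
through the sides of the quadrilateral `xyzw` and the terms `(1 - t - s)² ρ(x,y)`, `(t - s)² ρ(w,x)`.
-/

section BoxSum

variable {Y : Type*} [PseudoMetricSpace Y]

noncomputable def boxSum (t s : ℝ) (x y z w : Y) : ℝ :=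
  (1 - t) * (1 - s) * dist x y + t * (1 - s) * dist y z + t * s * dist z w
    + (1 - t) * s * dist w x - t * (1 - t) * dist x z - s * (1 - s) * dist y w

lemma boxSum_one_sub_left (t s : ℝ) (x y z w : Y) :
    boxSum (1 - t) s z y x w = boxSum t s x y z w := by
  simp only [boxSum, dist_comm z y, dist_comm x w, dist_comm y x, dist_comm w z, dist_comm z x]
  ring

lemma boxSum_one_sub_right (t s : ℝ) (x y z w : Y) :
    boxSum t (1 - s) x w z y = boxSum t s x y z w := by
  simp only [boxSum, dist_comm x w, dist_comm w z, dist_comm z y, dist_comm y x, dist_comm w y]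
  ring

lemma boxSum_swap (t s : ℝ) (x y z w : Y) :
    boxSum s t y x w z = boxSum t s x y z w := by
  simp only [boxSum, dist_comm y x, dist_comm x w, dist_comm w z, dist_comm z y, dist_comm x z]
  ring

lemma boxSum_nonneg_of_le_of_le_half {t s : ℝ} (ht : 0 ≤ t) (hts : t ≤ s) (hs : s ≤ 1 / 2)
    (x y z w : Y) : 0 ≤ boxSum t s x y z w := by
  have hxyz : 0 ≤ t * (2 - t - 2 * s) / 2 * (dist x y + dist y z - dist x z) :=
    mul_nonneg (by nlinarith) (by linarith [dist_triangle x y z])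
  have hzwx : 0 ≤ t * (2 * s - t) / 2 * (dist z w + dist w x - dist x z) :=
    mul_nonneg (by nlinarith) (by linarith [dist_triangle z w x, dist_comm x z])
  have hyzw : 0 ≤ t ^ 2 / 2 * (dist y z + dist z w - dist y w) :=
    mul_nonneg (by positivity) (by linarith [dist_triangle y z w])
  have hyxw : 0 ≤ (2 * s - 2 * s ^ 2 - t ^ 2) / 2 * (dist x y + dist w x - dist y w) :=
    mul_nonneg (by nlinarith)
      (by linarith [dist_triangle y x w, dist_comm x y, dist_comm w x])
  have hxy : 0 ≤ (1 - t - s) ^ 2 * dist x y := by positivity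
  have hwx : 0 ≤ (t - s) ^ 2 * dist w x := by positivity
  have hsum : boxSum t s x y z w = t * (2 - t - 2 * s) / 2 * (dist x y + dist y z - dist x z)
      + t * (2 * s - t) / 2 * (dist z w + dist w x - dist x z)
      + t ^ 2 / 2 * (dist y z + dist z w - dist y w)
      + (2 * s - 2 * s ^ 2 - t ^ 2) / 2 * (dist x y + dist w x - dist y w)
      + (1 - t - s) ^ 2 * dist x y + (t - s) ^ 2 * dist w x := by
    rw [boxSum]; ring
  rw [hsum]
  positivity

theorem boxSum_nonneg {t s : ℝ} (ht0 : 0 ≤ t) (ht1 : t ≤ 1) (hs0 : 0 ≤ s) (hs1 : s ≤ 1)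
    (x y z w : Y) : 0 ≤ boxSum t s x y z w := by
  wlog ht : t ≤ 1 / 2 generalizing t x z
  · rw [← boxSum_one_sub_left]
    exact this (by linarith) (by linarith) z x (by linarith)
  wlog hs : s ≤ 1 / 2 generalizing s y w
  · rw [← boxSum_one_sub_right]
    exact this (by linarith) (by linarith) w y (by linarith)
  wlog hts : t ≤ s generalizing t s x y z w
  · rw [← boxSum_swap]
    exact this hs0 hs1 y w hs ht0 ht1 x z ht (by linarith)
  exact boxSum_nonneg_of_le_of_le_half ht0 hts hs x y z w

end BoxSum

theorem stmt_0 {X : Type*} [MetricSpace X] (α : ℝ) (hα0 : 0 < α) (hα : α ≤ 1 / 2)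
    (t s : ℝ) (ht0 : 0 ≤ t) (ht1 : t ≤ 1) (hs0 : 0 ≤ s) (hs1 : s ≤ 1)
    (x y z w : X) :
    0 ≤ (1 - t) * (1 - s) * dist x y ^ (2 * α) + t * (1 - s) * dist y z ^ (2 * α)
      + t * s * dist z w ^ (2 * α) + (1 - t) * s * dist w x ^ (2 * α)
      - t * (1 - t) * dist x z ^ (2 * α) - s * (1 - s) * dist y w ^ (2 * α) := by
  let ι : X → Metric.Snowflaking X (2 * α) (by positivity) (by linarith) :=
    Metric.Snowflaking.toSnowflaking
  simpa only [boxSum, ι, Metric.Snowflaking.dist_toSnowflaking_toSnowflaking] using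
    boxSum_nonneg ht0 ht1 hs0 hs1 (ι x) (ι y) (ι z) (ι w)
end

section
/- Let x, y, z, ỹ be points in a real inner product space. If ‖x - y‖ ≤ ‖x - ỹ‖ and ‖y - z‖ ≤ ‖ỹ - z‖, then for every point p on the segment [x, z], ‖y - p‖ ≤ ‖ỹ - p‖. -/
theorem stmt_2 {E : Type*} [NormedAddCommGroup E] [InnerProductSpace ℝ E]
    (x y z ytil : E) (h1 : ‖x - y‖ ≤ ‖x - ytil‖) (h2 : ‖y - z‖ ≤ ‖ytil - z‖) :
    ∀ p ∈ segment ℝ x z, ‖y - p‖ ≤ ‖ytil - p‖ := by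
  intro p hp
  obtain ⟨a, b, ha, hb, hab, rfl⟩ := hp
  have H1 : ‖x - y‖ ^ 2 ≤ ‖x - ytil‖ ^ 2 := by
    exact pow_le_pow_left₀ (norm_nonneg _) h1 2
  have H2 : ‖y - z‖ ^ 2 ≤ ‖ytil - z‖ ^ 2 := by
    exact pow_le_pow_left₀ (norm_nonneg _) h2 2
  have key : ∀ w : E, ‖w - (a • x + b • z)‖ ^ 2
      = a * ‖w - x‖ ^ 2 + b * ‖w - z‖ ^ 2 - a * b * ‖x - z‖ ^ 2 := by
    intro w
    have e : ∀ u v : E, ‖u - v‖ ^ 2 = ‖u‖ ^ 2 - 2 * inner ℝ u v + ‖v‖ ^ 2 :=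
      fun u v => @norm_sub_sq_real E _ _ u v
    simp only [e, norm_add_sq_real, norm_smul, inner_add_right, inner_smul_right,
      real_inner_smul_left, real_inner_smul_right, real_inner_comm x z,
      Real.norm_eq_abs, mul_pow, sq_abs, real_inner_self_eq_norm_sq]
    have hb' : b = 1 - a := by linarith
    subst hb'
    ring
  have goal2 : ‖y - (a • x + b • z)‖ ^ 2 ≤ ‖ytil - (a • x + b • z)‖ ^ 2 := by
    rw [key y, key ytil]
    have h1' : ‖y - x‖ ^ 2 ≤ ‖ytil - x‖ ^ 2 := by
      rwa [norm_sub_rev y x, norm_sub_rev ytil x]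
    nlinarith [mul_le_mul_of_nonneg_left h1' ha, mul_le_mul_of_nonneg_left H2 hb]
  nlinarith [norm_nonneg (y - (a • x + b • z)), norm_nonneg (ytil - (a • x + b • z)), goal2]
end

section
/- Monotone comparison of triangles in Euclidean space: suppose x, y, z, x', y', z' are points in a real inner product space with ‖x - y‖ ≤ ‖x' - y'‖, ‖y - z‖ ≤ ‖y' - z'‖, and ‖x' - z'‖ ≤ ‖x - z‖. Fix t ∈ [0,1] and set p = (1-t)x + tz and p' = (1-t)x' + tz'. Then ‖y - p‖ ≤ ‖y' - p'‖. -/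
/-!
By Stewart's theorem, the squared distance from `y` to the point `(1 - t) • x + t • z` equals
`(1 - t) ‖y - x‖² + t ‖y - z‖² - t (1 - t) ‖x - z‖²`. For `t ∈ [0, 1]` this expression is
monotone in the two sides at `y` and antitone in the opposite side `‖x - z‖`, so the hypotheses
compare the squared distances, and hence the distances.
-/

theorem norm_sub_smul_add_smul_sq {E : Type*} [NormedAddCommGroup E] [InnerProductSpace ℝ E]
    (x y z : E) (t : ℝ) :
    ‖y - ((1 - t) • x + t • z)‖ ^ 2
      = (1 - t) * ‖y - x‖ ^ 2 + t * ‖y - z‖ ^ 2 - t * (1 - t) * ‖x - z‖ ^ 2 := by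
  have hp : y - ((1 - t) • x + t • z) = (1 - t) • (y - x) + t • (y - z) := by module
  have hxz : x - z = (y - z) - (y - x) := by abel
  rw [hp, hxz, ← real_inner_self_eq_norm_sq, ← real_inner_self_eq_norm_sq,
    ← real_inner_self_eq_norm_sq, ← real_inner_self_eq_norm_sq]
  simp only [inner_add_add_self, inner_sub_sub_self, real_inner_smul_left,
    real_inner_smul_right, real_inner_comm (y - x) (y - z)]
  ring

theorem stmt_3 {E : Type*} [NormedAddCommGroup E] [InnerProductSpace ℝ E]
    (x y z x' y' z' : E)
    (h1 : ‖x - y‖ ≤ ‖x' - y'‖) (h2 : ‖y - z‖ ≤ ‖y' - z'‖) (h3 : ‖x' - z'‖ ≤ ‖x - z‖)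
    (t : ℝ) (ht0 : 0 ≤ t) (ht1 : t ≤ 1)
    (p p' : E) (hp : p = (1 - t) • x + t • z) (hp' : p' = (1 - t) • x' + t • z') :
    ‖y - p‖ ≤ ‖y' - p'‖ := by
  rw [norm_sub_rev x, norm_sub_rev x'] at h1
  have ht1' : 0 ≤ 1 - t := sub_nonneg.mpr ht1
  have hsq : ‖y - p‖ ^ 2 ≤ ‖y' - p'‖ ^ 2 := by
    rw [hp, hp', norm_sub_smul_add_smul_sq, norm_sub_smul_add_smul_sq]
    have htt : 0 ≤ t * (1 - t) := mul_nonneg ht0 ht1'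
    gcongr
  exact (pow_le_pow_iff_left₀ (norm_nonneg _) (norm_nonneg _) two_ne_zero).mp hsq
end

section
/- Euclidean angle comparison (Lemma 2.2, κ = 0): let x, y, z be three distinct points in the Euclidean plane with ‖x - y‖ ≤ ‖y - z‖, and let x', y', z' be points with ‖x - y‖ = ‖x' - y'‖, ‖y - z‖ = ‖y' - z'‖, and ‖z - x‖ ≤ ‖z' - x'‖. Then the angle ∠y'x'z' at x' is at most the angle ∠yxz at x. -/
/-!
By the law of cosines, the cosine of the angle at `x` of a triangle with sides `a = |xy|`,
`b = |xz|`, `c = |yz|` is `(a² + b² - c²) / (2ab) = (b + (a² - c²) / b) / (2a)`. When `a ≤ c` this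
is nondecreasing in `b`, so lengthening the side `xz` while keeping `a` and `c` fixed can only
increase the cosine, i.e. shrink the angle.
-/

open EuclideanGeometry

variable {V P V' P' : Type*}
  [NormedAddCommGroup V] [InnerProductSpace ℝ V] [MetricSpace P] [NormedAddTorsor V P]
  [NormedAddCommGroup V'] [InnerProductSpace ℝ V'] [MetricSpace P'] [NormedAddTorsor V' P']

theorem EuclideanGeometry.cos_angle_eq_div_of_ne {p₁ p₂ p₃ : P} (h₁ : p₂ ≠ p₁) (h₃ : p₂ ≠ p₃) :
    Real.cos (∠ p₁ p₂ p₃) =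
      (dist p₂ p₁ ^ 2 + dist p₂ p₃ ^ 2 - dist p₁ p₃ ^ 2) / (2 * dist p₂ p₁ * dist p₂ p₃) := by
  have := dist_pos.2 h₁
  have := dist_pos.2 h₃
  have law := law_cos p₁ p₂ p₃
  rw [dist_comm p₁ p₂, dist_comm p₃ p₂] at law
  rw [eq_div_iff (by positivity)]
  linear_combination law

theorem cosine_rule_ratio_le_of_le {a b b' c : ℝ} (ha : 0 < a) (hb : 0 < b) (hbb' : b ≤ b')
    (hac : a ≤ c) :
    (a ^ 2 + b ^ 2 - c ^ 2) / (2 * a * b) ≤ (a ^ 2 + b' ^ 2 - c ^ 2) / (2 * a * b') := by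
  have hb' : 0 < b' := hb.trans_le hbb'
  rw [div_le_div_iff₀ (by positivity) (by positivity)]
  have key : 0 ≤ (b' - b) * (b * b' + c ^ 2 - a ^ 2) :=
    mul_nonneg (sub_nonneg.2 hbb') (by nlinarith [mul_pos hb hb'])
  nlinarith [mul_nonneg (mul_nonneg zero_le_two ha.le) key]

theorem EuclideanGeometry.angle_le_angle_of_dist_le {x y z : P} {x' y' z' : P'}
    (hxy : x ≠ y) (hxz : x ≠ z) (hle : dist x y ≤ dist y z)
    (h₁ : dist x y = dist x' y') (h₂ : dist y z = dist y' z') (h₃ : dist x z ≤ dist x' z') :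
    ∠ y' x' z' ≤ ∠ y x z := by
  have hxz_pos : 0 < dist x z := dist_pos.2 hxz
  have hxy' : x' ≠ y' := dist_pos.1 (h₁ ▸ dist_pos.2 hxy)
  have hxz' : x' ≠ z' := dist_pos.1 (hxz_pos.trans_le h₃)
  rw [← Real.strictAntiOn_cos.le_iff_ge ⟨angle_nonneg _ _ _, angle_le_pi _ _ _⟩
      ⟨angle_nonneg _ _ _, angle_le_pi _ _ _⟩,
    cos_angle_eq_div_of_ne hxy hxz, cos_angle_eq_div_of_ne hxy' hxz', ← h₁, ← h₂]
  exact cosine_rule_ratio_le_of_le (dist_pos.2 hxy) hxz_pos h₃ hle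

theorem stmt_5_general (x y z x' y' z' : EuclideanSpace ℝ (Fin 2))
    (hxy : x ≠ y) (hxz : x ≠ z)
    (hle : ‖x - y‖ ≤ ‖y - z‖)
    (h1 : ‖x - y‖ = ‖x' - y'‖) (h2 : ‖y - z‖ = ‖y' - z'‖) (h3 : ‖z - x‖ ≤ ‖z' - x'‖) :
    ∠ y' x' z' ≤ ∠ y x z := by
  simp only [← dist_eq_norm] at hle h1 h2 h3
  rw [dist_comm z, dist_comm z'] at h3
  exact angle_le_angle_of_dist_le hxy hxz hle h1 h2 h3

theorem stmt_5 (x y z x' y' z' : EuclideanSpace ℝ (Fin 2))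
    (hxy : x ≠ y) (hyz : y ≠ z) (hxz : x ≠ z)
    (hle : ‖x - y‖ ≤ ‖y - z‖)
    (h1 : ‖x - y‖ = ‖x' - y'‖) (h2 : ‖y - z‖ = ‖y' - z'‖) (h3 : ‖z - x‖ ≤ ‖z' - x'‖) :
    ∠ y' x' z' ≤ ∠ y x z :=
  stmt_5_general x y z x' y' z' hxy hxz hle h1 h2 h3
end

section
/- Euclidean version of Proposition 3.10: let o, x, y, z be points in the Euclidean plane with o ∉ {x,y,z}. If π ≤ ∠yox + ∠xoz, then ‖y - o‖ + ‖o - z‖ ≤ ‖y - x‖ + ‖x - z‖. -/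
/-! Project `x` orthogonally onto the lines `oy` and `oz`: by the law of cosines,
`dist y x ≥ dist y o - dist x o * cos ∠yox` and likewise for `z`. The hypothesis
`π ≤ ∠yox + ∠xoz` gives `cos ∠yox ≤ -cos ∠xoz`, so the two projection terms cancel in the sum. -/

open EuclideanGeometry Real

theorem Real.cos_le_neg_cos_of_pi_le_add {α β : ℝ} (hα : α ≤ π) (hβ : β ≤ π)
    (h : π ≤ α + β) : cos α ≤ -cos β := by
  rw [← cos_pi_sub]
  exact cos_le_cos_of_nonneg_of_le_pi (by linarith) hα (by linarith)

namespace EuclideanGeometry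

variable {V P : Type*} [NormedAddCommGroup V] [InnerProductSpace ℝ V] [MetricSpace P]
  [NormedAddTorsor V P]

theorem dist_sub_dist_mul_cos_angle_le (a o b : P) :
    dist a o - dist b o * cos (∠ a o b) ≤ dist a b := by
  refine le_of_sq_le_sq ?_ dist_nonneg
  nlinarith [law_cos a o b, sin_sq_add_cos_sq (∠ a o b), sq_nonneg (dist b o * sin (∠ a o b))]

theorem dist_add_dist_le_of_pi_le_angle_add {o x y z : P} (h : π ≤ ∠ y o x + ∠ x o z) :
    dist y o + dist z o ≤ dist y x + dist z x := by
  have hcos : cos (∠ y o x) ≤ -cos (∠ z o x) := by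
    rw [angle_comm z]
    exact cos_le_neg_cos_of_pi_le_add (angle_le_pi _ _ _) (angle_le_pi _ _ _) h
  have hy := dist_sub_dist_mul_cos_angle_le y o x
  have hz := dist_sub_dist_mul_cos_angle_le z o x
  linarith [mul_le_mul_of_nonneg_left hcos (dist_nonneg : 0 ≤ dist x o)]

end EuclideanGeometry

theorem stmt_6_general (o x y z : EuclideanSpace ℝ (Fin 2))
    (h : π ≤ ∠ y o x + ∠ x o z) :
    ‖y - o‖ + ‖o - z‖ ≤ ‖y - x‖ + ‖x - z‖ := by
  simpa only [dist_eq_norm_vsub, vsub_eq_sub, norm_sub_rev z] using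
    dist_add_dist_le_of_pi_le_angle_add h

theorem stmt_6 (o x y z : EuclideanSpace ℝ (Fin 2))
    (hox : o ≠ x) (hoy : o ≠ y) (hoz : o ≠ z)
    (h : π ≤ ∠ y o x + ∠ x o z) :
    ‖y - o‖ + ‖o - z‖ ≤ ‖y - x‖ + ‖x - z‖ :=
  stmt_6_general o x y z h
end

section
/- Euclidean version of Proposition 3.11: let o, x, y, z be points in the Euclidean plane with o ∉ {x,y,z}. If π ≤ ∠yox + ∠xoz, then for every point p on the segment [o, x], ‖y - o‖ + ‖o - z‖ ≤ ‖y - p‖ + ‖p - z‖. -/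
/-!
The component of `y - p` along the direction of `y - o` has length `‖y - o‖ - ‖p - o‖ cos ∠yop`,
which bounds `‖y - p‖` from below; likewise for `z`. Since `∠yop + ∠poz ≥ π`, the two cosines
have nonpositive sum. A point `p ≠ o` of the segment `[o, x]` sees `y` and `z` under the same
angles as `x` does.
-/

open EuclideanGeometry Real
open scoped RealInnerProductSpace

theorem Real.cos_add_cos_nonpos_of_pi_le_add {α β : ℝ} (hα : α ≤ π) (hβ : β ≤ π)
    (h : π ≤ α + β) : cos α + cos β ≤ 0 := by
  have hcos : cos β ≤ cos (π - α) :=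
    cos_le_cos_of_nonneg_of_le_pi (sub_nonneg.2 hα) hβ (by linarith)
  rw [cos_pi_sub] at hcos
  linarith

namespace InnerProductGeometry

variable {V : Type*} [NormedAddCommGroup V] [InnerProductSpace ℝ V]

theorem norm_sub_mul_cos_angle_le_norm_sub (a w : V) :
    ‖a‖ - ‖w‖ * cos (angle a w) ≤ ‖a - w‖ := by
  rcases eq_or_ne a 0 with rfl | ha
  · simp
  refine le_of_mul_le_mul_left ?_ (norm_pos_iff.2 ha)
  calc ‖a‖ * (‖a‖ - ‖w‖ * cos (angle a w)) = ⟪a, a - w⟫ := by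
        rw [inner_sub_right, real_inner_self_eq_norm_sq, ← cos_angle_mul_norm_mul_norm]
        ring
    _ ≤ ‖a‖ * ‖a - w‖ := real_inner_le_norm _ _

theorem norm_add_norm_le_norm_sub_add_norm_sub_of_pi_le_angle_add {a b w : V}
    (h : π ≤ angle a w + angle w b) : ‖a‖ + ‖b‖ ≤ ‖a - w‖ + ‖b - w‖ := by
  have hcos : cos (angle a w) + cos (angle b w) ≤ 0 := by
    rw [angle_comm b w]
    exact cos_add_cos_nonpos_of_pi_le_add (angle_le_pi a w) (angle_le_pi w b) h
  have hw : ‖w‖ * (cos (angle a w) + cos (angle b w)) ≤ 0 :=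
    mul_nonpos_of_nonneg_of_nonpos (norm_nonneg w) hcos
  linarith [norm_sub_mul_cos_angle_le_norm_sub a w, norm_sub_mul_cos_angle_le_norm_sub b w]

end InnerProductGeometry

namespace EuclideanGeometry

variable {V P : Type*} [NormedAddCommGroup V] [InnerProductSpace ℝ V] [MetricSpace P]
  [NormedAddTorsor V P]

theorem dist_add_dist_le_dist_add_dist_of_pi_le_angle_add {y o p z : P}
    (h : π ≤ ∠ y o p + ∠ p o z) : dist y o + dist o z ≤ dist y p + dist p z := by
  have key :=
    InnerProductGeometry.norm_add_norm_le_norm_sub_add_norm_sub_of_pi_le_angle_add (V := V) h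
  rwa [vsub_sub_vsub_cancel_right, vsub_sub_vsub_cancel_right, ← dist_eq_norm_vsub,
    ← dist_eq_norm_vsub, ← dist_eq_norm_vsub, ← dist_eq_norm_vsub, dist_comm z o,
    dist_comm z p] at key

end EuclideanGeometry

theorem stmt_7_general (o x y z : EuclideanSpace ℝ (Fin 2))
    (h : π ≤ ∠ y o x + ∠ x o z) :
    ∀ p ∈ segment ℝ o x, ‖y - o‖ + ‖o - z‖ ≤ ‖y - p‖ + ‖p - z‖ := by
  intro p hp
  rcases eq_or_ne p o with rfl | hpo
  · exact le_rfl
  have hbtw : Wbtw ℝ o p x := mem_segment_iff_wbtw.1 hp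
  have hangle : π ≤ ∠ y o p + ∠ p o z := by
    rwa [hbtw.angle_eq_right y hpo, hbtw.angle_eq_left z hpo]
  simpa only [dist_eq_norm] using dist_add_dist_le_dist_add_dist_of_pi_le_angle_add hangle

theorem stmt_7 (o x y z : EuclideanSpace ℝ (Fin 2))
    (hox : o ≠ x) (hoy : o ≠ y) (hoz : o ≠ z)
    (h : π ≤ ∠ y o x + ∠ x o z) :
    ∀ p ∈ segment ℝ o x, ‖y - o‖ + ‖o - z‖ ≤ ‖y - p‖ + ‖p - z‖ :=
  stmt_7_general o x y z h
end

section
/- Convex quadrilateral criterion (Euclidean case of Proposition 3.6): let x, y, z, w be points in the Euclidean plane with x ≠ y, x ≠ z, x ≠ w, y ≠ z, z ≠ w. Then the segments [x,z] and [y,w] intersect if and only if ∠yxz + ∠zxw ≤ π, ∠yzx + ∠xzw ≤ π, and y and w do not lie strictly on the same side of the line through x and z. -/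
open EuclideanGeometry Real

noncomputable section

namespace Stmt8Aux

open InnerProductGeometry AffineSubspace

instance : Fact (Module.finrank ℝ (EuclideanSpace ℝ (Fin 2)) = 2) :=
  ⟨finrank_euclideanSpace_fin⟩

instance : Module.Oriented ℝ (EuclideanSpace ℝ (Fin 2)) (Fin 2) :=
  ⟨Module.Basis.orientation (EuclideanSpace.basisFun (Fin 2) ℝ).toBasis⟩

/-- If `p` is on the ray from `x` through `z`, angles at `x` to `p` and to `z` agree. -/
theorem angle_eq_of_wbtw {x p z : EuclideanSpace ℝ (Fin 2)} (u : EuclideanSpace ℝ (Fin 2))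
    (h : Wbtw ℝ x p z) (hpx : p ≠ x) : ∠ u x p = ∠ u x z := by
  obtain ⟨t, ⟨ht0, ht1⟩, rfl⟩ := h
  have hz : (AffineMap.lineMap x z) t -ᵥ x = t • (z -ᵥ x) := by
    simp [AffineMap.lineMap_apply]
  have htne : t ≠ 0 := by
    rintro rfl
    simp at hpx
  have ht : 0 < t := lt_of_le_of_ne ht0 (Ne.symm htne)
  show InnerProductGeometry.angle _ _ = InnerProductGeometry.angle _ _
  rw [hz, angle_smul_right_of_pos _ _ ht]

theorem not_collinear_helper {x z y p w q : EuclideanSpace ℝ (Fin 2)}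
    (hy : y ∉ line[ℝ, x, z]) (hp : p ∈ line[ℝ, x, z]) (hq : q ∈ line[ℝ, x, z]) (hqp : q ≠ p)
    (hw : Wbtw ℝ y p w) (hyw : y ≠ w) :
    ¬ Collinear ℝ ({y, q, w} : Set (EuclideanSpace ℝ (Fin 2))) := by
  intro hc
  have hc2 : Collinear ℝ ({y, p, w} : Set (EuclideanSpace ℝ (Fin 2))) := hw.collinear
  have hqm : q ∈ line[ℝ, y, w] :=
    hc.mem_affineSpan_of_mem_of_ne (by simp) (by simp) (by simp) hyw
  have hpm : p ∈ line[ℝ, y, w] :=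
    hc2.mem_affineSpan_of_mem_of_ne (by simp) (by simp) (by simp) hyw
  have h4 : Collinear ℝ ({q, p, y, w} : Set (EuclideanSpace ℝ (Fin 2))) :=
    collinear_insert_insert_of_mem_affineSpan_pair hqm hpm
  have h3 : Collinear ℝ ({q, p, y} : Set (EuclideanSpace ℝ (Fin 2))) := by
    refine h4.subset ?_
    intro a ha
    simp only [Set.mem_insert_iff, Set.mem_singleton_iff] at ha ⊢
    tauto
  have hym : y ∈ line[ℝ, q, p] :=
    h3.mem_affineSpan_of_mem_of_ne (by simp) (by simp) (by simp) hqp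
  exact hy (affineSpan_pair_le_of_mem_of_mem hq hp hym)

theorem angle_pos_of_not_collinear {a b c : EuclideanSpace ℝ (Fin 2)}
    (h : ¬ Collinear ℝ ({a, b, c} : Set (EuclideanSpace ℝ (Fin 2)))) :
    0 < ∠ a b c ∧ ∠ a b c < π := by
  have h0 : ∠ a b c ≠ 0 := fun h' =>
    h (collinear_iff_eq_or_eq_or_angle_eq_zero_or_angle_eq_pi.2 (Or.inr (Or.inr (Or.inl h'))))
  have hpi : ∠ a b c ≠ π := fun h' =>
    h (collinear_iff_eq_or_eq_or_angle_eq_zero_or_angle_eq_pi.2 (Or.inr (Or.inr (Or.inr h'))))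
  exact ⟨lt_of_le_of_ne (EuclideanGeometry.angle_nonneg a b c) (Ne.symm h0),
    lt_of_le_of_ne (EuclideanGeometry.angle_le_pi a b c) hpi⟩

/-- Key additivity of unoriented angles over a betweenness relation. -/
theorem angle_add_of_wbtw {y p w q : EuclideanSpace ℝ (Fin 2)} (h : Wbtw ℝ y p w)
    (hqy : q ≠ y) (hqw : q ≠ w) : ∠ y q p + ∠ p q w = ∠ y q w := by
  rcases eq_or_ne p q with rfl | hpq
  · have hs : Sbtw ℝ y p w := ⟨h, hqy, hqw⟩
    rw [hs.angle₁₂₃_eq_pi, EuclideanGeometry.angle_self_right,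
      EuclideanGeometry.angle_self_left]
    ring
  rcases eq_or_ne y p with rfl | hyp
  · rw [EuclideanGeometry.angle_self_of_ne hpq, zero_add]
  rcases eq_or_ne p w with rfl | hpw
  · rw [EuclideanGeometry.angle_self_of_ne hpq, add_zero]
  have hsb : Sbtw ℝ y p w := ⟨h, Ne.symm hyp, hpw⟩
  have h12 : (∡ y q p).sign = (∡ p q w).sign := hsb.oangle_sign_eq q
  have h1w : (∡ y q p).sign = (∡ y q w).sign := hsb.oangle_sign_eq_left q
  have hadd : ∡ y q p + ∡ p q w = ∡ y q w :=
    EuclideanGeometry.oangle_add (Ne.symm hqy) hpq (Ne.symm hqw)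
  have tri : ∀ s : SignType, s = 0 ∨ s = 1 ∨ s = -1 := by decide
  rcases tri (∡ y q p).sign with hs0 | hsgn
  · -- collinear case
    obtain ⟨t, ⟨ht0, ht1⟩, hmap⟩ := h
    have hc : Collinear ℝ ({y, q, p} : Set (EuclideanSpace ℝ (Fin 2))) :=
      oangle_sign_eq_zero_iff_collinear.1 hs0
    have htne0 : t ≠ 0 := by
      rintro rfl
      simp only [AffineMap.lineMap_apply_zero] at hmap
      exact hyp hmap
    have htne1 : t ≠ 1 := by
      rintro rfl
      simp only [AffineMap.lineMap_apply_one] at hmap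
      exact hpw hmap.symm
    have ht0' : 0 < t := lt_of_le_of_ne ht0 (Ne.symm htne0)
    have ht1' : t < 1 := lt_of_le_of_ne ht1 htne1
    set u : EuclideanSpace ℝ (Fin 2) := y -ᵥ q with hu_def
    have hu : u ≠ 0 := vsub_ne_zero.2 (Ne.symm hqy)
    have hm : p -ᵥ q = (1 - t) • u + t • (w -ᵥ q) := by
      rw [← hmap]
      simp only [AffineMap.lineMap_apply, hu_def, vsub_eq_sub, vadd_eq_add]
      module
    have hpmem : p ∈ line[ℝ, q, y] :=
      hc.mem_affineSpan_of_mem_of_ne (by simp) (by simp) (by simp) hqy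
    obtain ⟨c, hc'⟩ : ∃ c : ℝ, c • (y -ᵥ q) = p -ᵥ q :=
      vadd_left_mem_affineSpan_pair.1
        (show (p -ᵥ q) +ᵥ q ∈ line[ℝ, q, y] by rwa [vsub_vadd])
    have hcne : c ≠ 0 := by
      rintro rfl
      rw [zero_smul] at hc'
      exact hpq (by rwa [eq_comm, vsub_eq_zero_iff_eq] at hc')
    have hveq : t • (w -ᵥ q) = (c - (1 - t)) • u := by
      have h0 : c • u = p -ᵥ q := by rw [hu_def]; exact hc'
      have h' : c • u = (1 - t) • u + t • (w -ᵥ q) := h0.trans hm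
      rw [sub_smul, h']
      abel
    have hwq : w -ᵥ q = ((c - (1 - t)) / t) • u := by
      calc w -ᵥ q = t⁻¹ • (t • (w -ᵥ q)) := by rw [inv_smul_smul₀ htne0]
        _ = t⁻¹ • ((c - (1 - t)) • u) := by rw [hveq]
        _ = ((c - (1 - t)) / t) • u := by rw [smul_smul]; congr 1; field_simp
    set d : ℝ := (c - (1 - t)) / t with hd_def
    have hdne : d ≠ 0 := by
      intro hd0
      rw [hd0, zero_smul] at hwq
      have hwq' : w = q := by rwa [vsub_eq_zero_iff_eq] at hwq
      exact hqw hwq'.symm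
    have hcd : c = (1 - t) + t * d := by
      have : t • (w -ᵥ q) = (t * d) • u := by rw [hwq, smul_smul]
      have h2 : (t * d) • u = (c - (1 - t)) • u := by rw [← this, hveq]
      have h3 : t * d = c - (1 - t) := by
        by_contra hne
        exact hne (smul_left_injective ℝ hu h2)
      linarith
    have e1 : ∠ y q p = InnerProductGeometry.angle u (c • u) := by
      show InnerProductGeometry.angle (y -ᵥ q) (p -ᵥ q) = _
      rw [← hc', ← hu_def]
    have e2 : ∠ p q w = InnerProductGeometry.angle (c • u) (d • u) := by
      show InnerProductGeometry.angle (p -ᵥ q) (w -ᵥ q) = _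
      rw [← hc', hwq, ← hu_def]
    have e3 : ∠ y q w = InnerProductGeometry.angle u (d • u) := by
      show InnerProductGeometry.angle (y -ᵥ q) (w -ᵥ q) = _
      rw [hwq, ← hu_def]
    rcases lt_or_gt_of_ne hdne with hdneg | hdpos
    · rcases lt_trichotomy c 0 with hcneg | hc0 | hcpos
      · have A1 : InnerProductGeometry.angle u (c • u) = π := by
          rw [angle_smul_right_of_neg _ _ hcneg, angle_self_neg_of_nonzero hu]
        have A2 : InnerProductGeometry.angle (c • u) (d • u) = 0 := by
          rw [angle_smul_left_of_neg _ _ hcneg, angle_smul_right_of_neg _ _ hdneg,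
            InnerProductGeometry.angle_self (neg_ne_zero.2 hu)]
        have A3 : InnerProductGeometry.angle u (d • u) = π := by
          rw [angle_smul_right_of_neg _ _ hdneg, angle_self_neg_of_nonzero hu]
        rw [e1, e2, e3, A1, A2, A3]; ring
      · exact absurd hc0 hcne
      · have A1 : InnerProductGeometry.angle u (c • u) = 0 := by
          rw [angle_smul_right_of_pos _ _ hcpos, InnerProductGeometry.angle_self hu]
        have A2 : InnerProductGeometry.angle (c • u) (d • u) = π := by
          rw [angle_smul_left_of_pos _ _ hcpos, angle_smul_right_of_neg _ _ hdneg,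
            angle_self_neg_of_nonzero hu]
        have A3 : InnerProductGeometry.angle u (d • u) = π := by
          rw [angle_smul_right_of_neg _ _ hdneg, angle_self_neg_of_nonzero hu]
        rw [e1, e2, e3, A1, A2, A3]; ring
    · have hcpos : 0 < c := by nlinarith
      have A1 : InnerProductGeometry.angle u (c • u) = 0 := by
        rw [angle_smul_right_of_pos _ _ hcpos, InnerProductGeometry.angle_self hu]
      have A2 : InnerProductGeometry.angle (c • u) (d • u) = 0 := by
        rw [angle_smul_left_of_pos _ _ hcpos, angle_smul_right_of_pos _ _ hdpos,
          InnerProductGeometry.angle_self hu]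
      have A3 : InnerProductGeometry.angle u (d • u) = 0 := by
        rw [angle_smul_right_of_pos _ _ hdpos, InnerProductGeometry.angle_self hu]
      rw [e1, e2, e3, A1, A2, A3]; ring
  · -- non-collinear case
    have hsne : (∡ y q p).sign ≠ 0 := by rcases hsgn with h' | h' <;> rw [h'] <;> decide
    have hn1 : ¬ Collinear ℝ ({y, q, p} : Set (EuclideanSpace ℝ (Fin 2))) := by
      rw [← oangle_sign_eq_zero_iff_collinear]; exact hsne
    have hn2 : ¬ Collinear ℝ ({p, q, w} : Set (EuclideanSpace ℝ (Fin 2))) := by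
      rw [← oangle_sign_eq_zero_iff_collinear, ← h12]; exact hsne
    have hn3 : ¬ Collinear ℝ ({y, q, w} : Set (EuclideanSpace ℝ (Fin 2))) := by
      rw [← oangle_sign_eq_zero_iff_collinear, ← h1w]; exact hsne
    obtain ⟨ha0, haπ⟩ := angle_pos_of_not_collinear hn1
    obtain ⟨hb0, hbπ⟩ := angle_pos_of_not_collinear hn2
    obtain ⟨hc0, hcπ⟩ := angle_pos_of_not_collinear hn3
    have hadd' : ((∠ y q p + ∠ p q w : ℝ) : Real.Angle) = ((∠ y q w : ℝ) : Real.Angle) := by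
      rcases hsgn with hs1 | hsn
      · rw [Real.Angle.coe_add, ← oangle_eq_angle_of_sign_eq_one hs1,
          ← oangle_eq_angle_of_sign_eq_one (h12 ▸ hs1),
          ← oangle_eq_angle_of_sign_eq_one (h1w ▸ hs1)]
        exact hadd
      · have e1 := oangle_eq_neg_angle_of_sign_eq_neg_one hsn
        have e2 := oangle_eq_neg_angle_of_sign_eq_neg_one (h12 ▸ hsn)
        have e3 := oangle_eq_neg_angle_of_sign_eq_neg_one (h1w ▸ hsn)
        have h' := hadd
        rw [e1, e2, e3, ← neg_add] at h'
        rw [Real.Angle.coe_add]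
        exact neg_inj.1 h'
    obtain ⟨k, hk⟩ := Real.Angle.angle_eq_iff_two_pi_dvd_sub.1 hadd'
    have hπ := Real.pi_pos
    have hk0 : k = 0 := by
      by_contra hk0
      rcases lt_or_gt_of_ne hk0 with hneg | hpos
      · have hkle : (k : ℝ) ≤ -1 := by exact_mod_cast (by omega : k ≤ -1)
        nlinarith
      · have hkge : (1 : ℝ) ≤ (k : ℝ) := by exact_mod_cast (by omega : 1 ≤ k)
        nlinarith
    rw [hk0] at hk
    push_cast at hk
    linarith

end Stmt8Aux

theorem stmt_8 (x y z w : EuclideanSpace ℝ (Fin 2))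
    (hxy : x ≠ y) (hxz : x ≠ z) (hxw : x ≠ w) (hyz : y ≠ z) (hzw : z ≠ w) :
    (segment ℝ x z ∩ segment ℝ y w).Nonempty ↔
      ∠ y x z + ∠ z x w ≤ π ∧ ∠ y z x + ∠ x z w ≤ π ∧
        ¬ (affineSpan ℝ ({x, z} : Set (EuclideanSpace ℝ (Fin 2)))).SSameSide y w := by
  have hxl : x ∈ line[ℝ, x, z] := left_mem_affineSpan_pair ℝ x z
  have hzl : z ∈ line[ℝ, x, z] := right_mem_affineSpan_pair ℝ x z
  have hu : (z -ᵥ x : EuclideanSpace ℝ (Fin 2)) ≠ 0 := vsub_ne_zero.2 (Ne.symm hxz)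
  have hmem : ∀ q : EuclideanSpace ℝ (Fin 2),
      q ∈ line[ℝ, x, z] ↔ ∃ r : ℝ, r • (z -ᵥ x) = q -ᵥ x := by
    intro q
    constructor
    · intro hq
      exact vadd_left_mem_affineSpan_pair.1
        (show (q -ᵥ x) +ᵥ x ∈ line[ℝ, x, z] by rwa [vsub_vadd])
    · rintro ⟨r, hr⟩
      have := vadd_left_mem_affineSpan_pair.2 ⟨r, hr⟩
      rwa [vsub_vadd] at this
  constructor
  · rintro ⟨p, hp1, hp2⟩
    have hw1 : Wbtw ℝ x p z := mem_segment_iff_wbtw.1 hp1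
    have hw2 : Wbtw ℝ y p w := mem_segment_iff_wbtw.1 hp2
    have hpl : p ∈ line[ℝ, x, z] :=
      hw1.collinear.mem_affineSpan_of_mem_of_ne (by simp) (by simp) (by simp) hxz
    refine ⟨?_, ?_, ?_⟩
    · rcases eq_or_ne p x with rfl | hpx
      · have hsb : Sbtw ℝ y p w := ⟨hw2, hxy, hxw⟩
        have hπ : ∠ y p w = π := hsb.angle₁₂₃_eq_pi
        have h3 := EuclideanGeometry.angle_add_angle_eq_pi_of_angle_eq_pi z hπ
        have hc := EuclideanGeometry.angle_comm y p z
        linarith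
      · have he : ∠ y x p = ∠ y x z := Stmt8Aux.angle_eq_of_wbtw y hw1 hpx
        have he2 : ∠ w x p = ∠ w x z := Stmt8Aux.angle_eq_of_wbtw w hw1 hpx
        have hk := Stmt8Aux.angle_add_of_wbtw hw2 hxy hxw
        have hle := EuclideanGeometry.angle_le_pi y x w
        have hc1 := EuclideanGeometry.angle_comm z x w
        have hc2 := EuclideanGeometry.angle_comm p x w
        linarith
    · rcases eq_or_ne p z with rfl | hpz
      · have hsb : Sbtw ℝ y p w := ⟨hw2, Ne.symm hyz, hzw⟩
        have hπ : ∠ y p w = π := hsb.angle₁₂₃_eq_pi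
        have h3 := EuclideanGeometry.angle_add_angle_eq_pi_of_angle_eq_pi x hπ
        have hc := EuclideanGeometry.angle_comm y p x
        linarith
      · have he : ∠ y z p = ∠ y z x := Stmt8Aux.angle_eq_of_wbtw y hw1.symm hpz
        have he2 : ∠ w z p = ∠ w z x := Stmt8Aux.angle_eq_of_wbtw w hw1.symm hpz
        have hk := Stmt8Aux.angle_add_of_wbtw hw2 (Ne.symm hyz) hzw
        have hle := EuclideanGeometry.angle_le_pi y z w
        have hc1 := EuclideanGeometry.angle_comm x z w
        have hc2 := EuclideanGeometry.angle_comm p z w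
        linarith
    · intro hss
      exact hss.not_wOppSide (AffineSubspace.wOppSide_iff_exists_wbtw.2 ⟨p, hpl, hw2⟩)
  · rintro ⟨h1, h2, hnot⟩
    by_cases hyl : y ∈ line[ℝ, x, z]
    · -- y on the line
      obtain ⟨r, hr⟩ := (hmem y).1 hyl
      have hr0 : r ≠ 0 := by
        rintro rfl
        rw [zero_smul] at hr
        exact hxy (by rwa [eq_comm, vsub_eq_zero_iff_eq, eq_comm] at hr)
      rcases lt_trichotomy r 0 with hrneg | hr0' | hrpos
      · -- x strictly between y and z; first angle condition forces w on ray x→z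
        have hpi : ∠ y x z = π := by
          show InnerProductGeometry.angle (y -ᵥ x) (z -ᵥ x) = π
          rw [← hr, InnerProductGeometry.angle_smul_left_of_neg _ _ hrneg,
            InnerProductGeometry.angle_neg_left,
            InnerProductGeometry.angle_self hu]
          ring
        have hzw0 : ∠ z x w = 0 := le_antisymm (by linarith)
          (EuclideanGeometry.angle_nonneg z x w)
        obtain ⟨-, r₂, hr₂, hw'⟩ := InnerProductGeometry.angle_eq_zero_iff.1 hzw0
        refine ⟨x, left_mem_segment ℝ x z, mem_segment_iff_wbtw.2 ?_⟩
        rw [wbtw_iff_sameRay_vsub]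
        have hxy' : x -ᵥ y = (-r) • (z -ᵥ x) := by
          rw [← neg_vsub_eq_vsub_rev, ← hr, neg_smul]
        refine Or.inr (Or.inr ⟨r₂, -r, hr₂, by linarith, ?_⟩)
        rw [hxy', hw', smul_smul, smul_smul, mul_comm]
      · exact absurd hr0' hr0
      · rcases lt_trichotomy r 1 with hr1 | hr1 | hr1
        · -- y between x and z
          refine ⟨y, mem_segment_iff_wbtw.2 ?_, left_mem_segment ℝ y w⟩
          rw [wbtw_iff_sameRay_vsub]
          have hzy : z -ᵥ y = (1 - r) • (z -ᵥ x) := by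
            rw [← vsub_sub_vsub_cancel_right z y x, ← hr, sub_smul, one_smul]
          refine Or.inr (Or.inr ⟨1 - r, r, by linarith, hrpos, ?_⟩)
          rw [← hr, hzy, smul_smul, smul_smul, mul_comm]
        · exfalso
          apply hyz
          rw [hr1, one_smul] at hr
          exact vsub_left_cancel hr.symm ▸ rfl
        · -- z strictly between y and x
          have hyz' : y -ᵥ z = (r - 1) • (z -ᵥ x) := by
            rw [← vsub_sub_vsub_cancel_right y z x, ← hr, sub_smul, one_smul]
          have hxz' : x -ᵥ z = (-1 : ℝ) • (z -ᵥ x) := by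
            rw [neg_one_smul, neg_vsub_eq_vsub_rev]
          have hpi : ∠ y z x = π := by
            show InnerProductGeometry.angle (y -ᵥ z) (x -ᵥ z) = π
            rw [hyz', hxz', InnerProductGeometry.angle_smul_left_of_pos _ _ (by linarith),
              InnerProductGeometry.angle_smul_right_of_neg _ _ (by norm_num),
              InnerProductGeometry.angle_self_neg_of_nonzero hu]
          have hxzw0 : ∠ x z w = 0 := le_antisymm (by linarith)
            (EuclideanGeometry.angle_nonneg x z w)
          obtain ⟨-, r₃, hr₃, hw'⟩ := InnerProductGeometry.angle_eq_zero_iff.1 hxzw0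
          refine ⟨z, right_mem_segment ℝ x z, mem_segment_iff_wbtw.2 ?_⟩
          rw [wbtw_iff_sameRay_vsub]
          have hzy' : z -ᵥ y = (1 - r) • (z -ᵥ x) := by
            rw [← neg_vsub_eq_vsub_rev y z, hyz']
            module
          have hwz' : w -ᵥ z = (-r₃) • (z -ᵥ x) := by
            rw [hw', hxz', smul_smul]
            module
          refine Or.inr (Or.inr ⟨r₃, r - 1, hr₃, by linarith, ?_⟩)
          rw [hzy', hwz', smul_smul, smul_smul]
          match_scalars
          ring
    · by_cases hwl : w ∈ line[ℝ, x, z]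
      · obtain ⟨r, hr⟩ := (hmem w).1 hwl
        have hr0 : r ≠ 0 := by
          rintro rfl
          rw [zero_smul] at hr
          exact hxw (by rwa [eq_comm, vsub_eq_zero_iff_eq, eq_comm] at hr)
        rcases lt_trichotomy r 0 with hrneg | hr0' | hrpos
        · exfalso
          have hpi : ∠ z x w = π := by
            show InnerProductGeometry.angle (z -ᵥ x) (w -ᵥ x) = π
            rw [← hr, InnerProductGeometry.angle_smul_right_of_neg _ _ hrneg,
              InnerProductGeometry.angle_self_neg_of_nonzero hu]
          have hyxz0 : ∠ y x z = 0 := le_antisymm (by linarith)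
            (EuclideanGeometry.angle_nonneg y x z)
          obtain ⟨-, c, hc, hzx'⟩ := InnerProductGeometry.angle_eq_zero_iff.1 hyxz0
          apply hyl
          refine (hmem y).2 ⟨c⁻¹, ?_⟩
          rw [hzx', inv_smul_smul₀ (ne_of_gt hc)]
        · exact absurd hr0' hr0
        · rcases lt_trichotomy r 1 with hr1 | hr1 | hr1
          · refine ⟨w, mem_segment_iff_wbtw.2 ?_, right_mem_segment ℝ y w⟩
            rw [wbtw_iff_sameRay_vsub]
            have hzw' : z -ᵥ w = (1 - r) • (z -ᵥ x) := by
              rw [← vsub_sub_vsub_cancel_right z w x, ← hr, sub_smul, one_smul]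
            refine Or.inr (Or.inr ⟨1 - r, r, by linarith, hrpos, ?_⟩)
            rw [← hr, hzw', smul_smul, smul_smul, mul_comm]
          · exfalso
            apply hzw
            rw [hr1, one_smul] at hr
            exact vsub_left_cancel hr ▸ rfl
          · exfalso
            have hwz' : w -ᵥ z = (r - 1) • (z -ᵥ x) := by
              rw [← vsub_sub_vsub_cancel_right w z x, ← hr, sub_smul, one_smul]
            have hxz' : x -ᵥ z = (-1 : ℝ) • (z -ᵥ x) := by
              rw [neg_one_smul, neg_vsub_eq_vsub_rev]
            have hpi : ∠ x z w = π := by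
              show InnerProductGeometry.angle (x -ᵥ z) (w -ᵥ z) = π
              rw [hwz', hxz', InnerProductGeometry.angle_smul_left_of_neg _ _ (by norm_num),
                InnerProductGeometry.angle_smul_right_of_pos _ _ (by linarith),
                InnerProductGeometry.angle_neg_left, InnerProductGeometry.angle_self hu]
              ring
            have hyzx0 : ∠ y z x = 0 := le_antisymm (by linarith)
              (EuclideanGeometry.angle_nonneg y z x)
            obtain ⟨-, c, hc, hxz2⟩ := InnerProductGeometry.angle_eq_zero_iff.1 hyzx0
            apply hyl
            refine (hmem y).2 ⟨1 - c⁻¹, ?_⟩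
            have hyz2 : y -ᵥ z = c⁻¹ • (x -ᵥ z) := by
              rw [hxz2, inv_smul_smul₀ (ne_of_gt hc)]
            have h5 : (y -ᵥ x) = (y -ᵥ z) - (x -ᵥ z) := (vsub_sub_vsub_cancel_right y x z).symm
            rw [h5, hyz2, show x -ᵥ z = -(z -ᵥ x) from (neg_vsub_eq_vsub_rev z x).symm ▸ rfl]
            module
      · -- both y and w off the line
        have hopp : (affineSpan ℝ ({x, z} : Set (EuclideanSpace ℝ (Fin 2)))).SOppSide y w := by
          have hli : LinearIndependent ℝ ![y -ᵥ x, z -ᵥ x] := by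
            rw [linearIndependent_fin2]
            constructor
            · simpa using hu
            · intro a ha
              apply hyl
              refine (hmem y).2 ⟨a, ?_⟩
              simpa using ha
          have hcard : Fintype.card (Fin 2) = Module.finrank ℝ (EuclideanSpace ℝ (Fin 2)) := by
            simp [finrank_euclideanSpace_fin]
          set B := basisOfLinearIndependentOfCardEqFinrank hli hcard with hB
          have hrepr := B.sum_repr (w -ᵥ x)
          rw [Fin.sum_univ_two] at hrepr
          have hB0 : B 0 = y -ᵥ x := by
            simp [hB, coe_basisOfLinearIndependentOfCardEqFinrank]
          have hB1 : B 1 = z -ᵥ x := by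
            simp [hB, coe_basisOfLinearIndependentOfCardEqFinrank]
          set a := B.repr (w -ᵥ x) 0 with ha_def
          set b := B.repr (w -ᵥ x) 1 with hb_def
          rw [hB0, hB1] at hrepr
          have ha0 : a ≠ 0 := by
            intro h0
            apply hwl
            refine (hmem w).2 ⟨b, ?_⟩
            rw [← hrepr, h0, zero_smul, zero_add]
          have hp2 : b • (z -ᵥ x) +ᵥ x ∈ line[ℝ, x, z] :=
            (hmem _).2 ⟨b, by rw [vadd_vsub]⟩
          have hkey : w = a • (y -ᵥ x) +ᵥ (b • (z -ᵥ x) +ᵥ x) := by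
            rw [vadd_vadd, hrepr, vsub_vadd]
          rcases lt_or_gt_of_ne ha0 with haneg | hapos
          · rw [show w = _ from hkey]
            exact AffineSubspace.sOppSide_smul_vsub_vadd_right hyl hxl hp2 haneg
          · refine absurd ?_ hnot
            rw [show w = _ from hkey]
            exact AffineSubspace.sSameSide_smul_vsub_vadd_right hyl hxl hp2 hapos
        obtain ⟨p, hpl, hsb⟩ := hopp.exists_sbtw
        have hyw : y ≠ w := by
          rintro rfl
          exact AffineSubspace.not_sOppSide_self _ y hopp
        obtain ⟨t, ht⟩ := (hmem p).1 hpl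
        rcases le_or_gt 0 t with ht0 | htneg
        · rcases le_or_gt t 1 with ht1 | ht1
          · refine ⟨p, mem_segment_iff_wbtw.2 ⟨t, ⟨ht0, ht1⟩, ?_⟩,
              mem_segment_iff_wbtw.2 hsb.wbtw⟩
            rw [AffineMap.lineMap_apply, ht, vsub_vadd]
          · -- t > 1 : contradiction at z
            exfalso
            have hpz : p ≠ z := by
              intro he
              rw [he] at ht
              have h0 : (t - 1) • (z -ᵥ x) = 0 := by
                rw [sub_smul, one_smul, ht, sub_self]
              rcases smul_eq_zero.1 h0 with h' | h'
              · linarith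
              · exact hu h'
            have hpzv : p -ᵥ z = (t - 1) • (z -ᵥ x) := by
              rw [← vsub_sub_vsub_cancel_right p z x, ← ht, sub_smul, one_smul]
            have hπ : ∠ p z x = π := by
              show InnerProductGeometry.angle (p -ᵥ z) (x -ᵥ z) = π
              rw [hpzv, show x -ᵥ z = (-1 : ℝ) • (z -ᵥ x) by
                  rw [neg_one_smul, neg_vsub_eq_vsub_rev],
                InnerProductGeometry.angle_smul_left_of_pos _ _ (by linarith),
                InnerProductGeometry.angle_smul_right_of_neg _ _ (by norm_num),
                InnerProductGeometry.angle_self_neg_of_nonzero hu]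
            have hkey := Stmt8Aux.angle_add_of_wbtw hsb.wbtw (Ne.symm hyz) hzw
            have hne : ∠ y z w ≠ π := by
              intro hp'
              have hsb2 : Sbtw ℝ y z w := EuclideanGeometry.angle_eq_pi_iff_sbtw.1 hp'
              exact Stmt8Aux.not_collinear_helper hyl hpl hzl (Ne.symm hpz) hsb.wbtw hyw
                hsb2.wbtw.collinear
            have h3 := EuclideanGeometry.angle_add_angle_eq_pi_of_angle_eq_pi y hπ
            have h4 := EuclideanGeometry.angle_add_angle_eq_pi_of_angle_eq_pi w hπ
            have h5 := EuclideanGeometry.angle_le_pi y z w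
            have hlt : ∠ y z w < π := lt_of_le_of_ne h5 hne
            have c1 := EuclideanGeometry.angle_comm p z w
            have c2 := EuclideanGeometry.angle_comm x z w
            linarith
        · -- t < 0 : contradiction at x
          exfalso
          have hpx : p ≠ x := by
            intro he
            rw [he, vsub_self] at ht
            rcases smul_eq_zero.1 ht with h' | h'
            · linarith
            · exact hu h'
          have hπ : ∠ p x z = π := by
            show InnerProductGeometry.angle (p -ᵥ x) (z -ᵥ x) = π
            rw [← ht, InnerProductGeometry.angle_smul_left_of_neg _ _ htneg,
              InnerProductGeometry.angle_neg_left, InnerProductGeometry.angle_self hu]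
            ring
          have hkey := Stmt8Aux.angle_add_of_wbtw hsb.wbtw hxy hxw
          have hne : ∠ y x w ≠ π := by
            intro hp'
            have hsb2 : Sbtw ℝ y x w := EuclideanGeometry.angle_eq_pi_iff_sbtw.1 hp'
            exact Stmt8Aux.not_collinear_helper hyl hpl hxl (Ne.symm hpx) hsb.wbtw hyw
              hsb2.wbtw.collinear
          have h3 := EuclideanGeometry.angle_add_angle_eq_pi_of_angle_eq_pi y hπ
          have h4 := EuclideanGeometry.angle_add_angle_eq_pi_of_angle_eq_pi w hπ
          have h5 := EuclideanGeometry.angle_le_pi y x w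
          have hlt : ∠ y x w < π := lt_of_le_of_ne h5 hne
          have c1 := EuclideanGeometry.angle_comm p x w
          have c2 := EuclideanGeometry.angle_comm z x w
          linarith
end
end

section
/- Euclidean case of Proposition 3.14 (angle additivity around a point): let o, x, y, z be points in the Euclidean plane with o distinct from x, y, z. If π ≤ ∠yox + ∠xoz and y and z do not lie strictly on the same side of the line through o and x, then ∠xoy + ∠yoz + ∠zox = 2π. -/
open EuclideanGeometry Real

noncomputable section

instance euclid2Fact : Fact (Module.finrank ℝ (EuclideanSpace ℝ (Fin 2)) = 2) :=
  ⟨finrank_euclideanSpace_fin⟩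

instance euclid2Oriented : Module.Oriented ℝ (EuclideanSpace ℝ (Fin 2)) (Fin 2) :=
  ⟨Module.Basis.orientation (EuclideanSpace.basisFun (Fin 2) ℝ).toBasis⟩

lemma aux_abs_toReal_high {c : ℝ} (h1 : π ≤ c) (h2 : c < 2 * π) :
    |((c : Real.Angle)).toReal| = 2 * π - c := by
  rcases eq_or_lt_of_le h1 with rfl | h1
  · rw [Real.Angle.toReal_coe_eq_self_iff.2 ⟨by linarith [Real.pi_pos], le_rfl⟩]
    rw [abs_of_pos Real.pi_pos]; ring
  · have hcoe : ((c : Real.Angle)) = ((c - 2 * π : ℝ) : Real.Angle) := by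
      rw [Real.Angle.coe_sub, Real.Angle.coe_two_pi, sub_zero]
    rw [hcoe, Real.Angle.toReal_coe_eq_self_iff.2 ⟨by linarith, by linarith [Real.pi_pos]⟩]
    rw [abs_of_neg (by linarith)]; ring

lemma aux_abs_toReal_low {c : ℝ} (h1 : -(2 * π) < c) (h2 : c ≤ -π) :
    |((c : Real.Angle)).toReal| = 2 * π + c := by
  rcases eq_or_lt_of_le h2 with rfl | h2'
  · have : ((-π : ℝ) : Real.Angle) = ((π : ℝ) : Real.Angle) := by
      rw [Real.Angle.coe_neg, Real.Angle.neg_coe_pi]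
    rw [this, Real.Angle.toReal_pi, abs_of_pos Real.pi_pos]; ring
  · have hcoe : ((c : Real.Angle)) = ((c + 2 * π : ℝ) : Real.Angle) := by
      rw [Real.Angle.coe_add, Real.Angle.coe_two_pi, add_zero]
    rw [hcoe, Real.Angle.toReal_coe_eq_self_iff.2 ⟨by linarith [Real.pi_pos], by linarith⟩]
    rw [abs_of_pos (by linarith)]; ring

/-- If the oriented angles at `o` from `x` to `y` and from `x` to `z` have the same nonzero
sign, then `y` and `z` are strictly on the same side of the line through `o` and `x`. -/
lemma aux_side (o x y z : EuclideanSpace ℝ (Fin 2))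
    (hs : (∡ x o y).sign = (∡ x o z).sign) (h0 : (∡ x o y).sign ≠ 0) :
    (affineSpan ℝ ({o, x} : Set (EuclideanSpace ℝ (Fin 2)))).SSameSide y z := by
  set ω : Orientation ℝ (EuclideanSpace ℝ (Fin 2)) (Fin 2) :=
    Module.Oriented.positiveOrientation with hω
  have hxy : ∡ x o y = ω.oangle (x -ᵥ o) (y -ᵥ o) := rfl
  have hxz : ∡ x o z = ω.oangle (x -ᵥ o) (z -ᵥ o) := rfl
  set v : EuclideanSpace ℝ (Fin 2) := x -ᵥ o with hv
  set w₁ : EuclideanSpace ℝ (Fin 2) := y -ᵥ o with hw₁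
  set w₂ : EuclideanSpace ℝ (Fin 2) := z -ᵥ o with hw₂
  have hne : ω.oangle v w₁ ≠ 0 ∧ ω.oangle v w₁ ≠ π := by
    rw [← not_or]
    intro hc
    exact h0 (hxy ▸ Real.Angle.sign_eq_zero_iff.2 hc)
  have hli : LinearIndependent ℝ ![v, w₁] := by
    by_contra hc
    rcases (ω.oangle_eq_zero_or_eq_pi_iff_not_linearIndependent).2 hc with hc' | hc'
    · exact hne.1 hc'
    · exact hne.2 hc'
  have hbB : ∃ r t : ℝ, w₂ = r • v + t • w₁ := by
    have htop : Submodule.span ℝ (Set.range ![v, w₁]) = ⊤ :=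
      hli.span_eq_top_of_card_eq_finrank (by simp [finrank_euclideanSpace_fin])
    have hrange : Set.range ![v, w₁] = {v, w₁} := by
      ext u
      simp [Fin.exists_fin_two, or_comm]
    rw [hrange] at htop
    have hmem : w₂ ∈ Submodule.span ℝ ({v, w₁} : Set (EuclideanSpace ℝ (Fin 2))) := by
      rw [htop]; trivial
    obtain ⟨r, t, hrt⟩ := Submodule.mem_span_pair.1 hmem
    exact ⟨r, t, hrt.symm⟩
  obtain ⟨r, t, hrt⟩ := hbB
  have hsign2 : (ω.oangle v w₂).sign = SignType.sign t * (ω.oangle v w₁).sign := by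
    rw [hrt, ω.oangle_sign_smul_add_right, ω.oangle_sign_smul_right]
  have ht : 0 < t := by
    rcases lt_trichotomy t 0 with h' | h' | h'
    · exfalso
      rw [hxy, hxz, hsign2, sign_neg h', neg_one_mul] at hs
      have hc0 : (ω.oangle v w₁).sign = 0 := by
        cases h'' : (ω.oangle v w₁).sign <;> rw [h''] at hs <;> first
          | rfl
          | exact absurd hs (by decide)
      exact h0 (hxy ▸ hc0)
    · exfalso
      rw [hxy, hxz, hsign2, h', _root_.sign_zero, zero_mul] at hs
      exact h0 (hxy ▸ hs)
    · exact h'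
  have hyns : y ∉ affineSpan ℝ ({o, x} : Set (EuclideanSpace ℝ (Fin 2))) := by
    intro hmem
    have hmem' : (y -ᵥ o) +ᵥ o ∈ affineSpan ℝ ({o, x} : Set (EuclideanSpace ℝ (Fin 2))) := by
      simpa using hmem
    obtain ⟨r', hr'⟩ := vadd_left_mem_affineSpan_pair.1 hmem'
    have hlc := (LinearIndependent.pair_iff.1 hli) r' (-1)
      (by rw [← hv] at hr'; rw [hr', ← hw₁]; module)
    norm_num at hlc
  have hzns : z ∉ affineSpan ℝ ({o, x} : Set (EuclideanSpace ℝ (Fin 2))) := by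
    intro hmem
    have hmem' : (z -ᵥ o) +ᵥ o ∈ affineSpan ℝ ({o, x} : Set (EuclideanSpace ℝ (Fin 2))) := by
      simpa using hmem
    obtain ⟨r', hr'⟩ := vadd_left_mem_affineSpan_pair.1 hmem'
    have hz0 : (ω.oangle v w₂).sign = 0 := by
      rw [← hw₂, ← hv] at hr'
      rw [← hr', ω.oangle_sign_smul_right, ω.oangle_self]
      simp
    rw [hxy, hxz, hz0] at hs
    exact h0 (hxy ▸ hs)
  refine ⟨⟨o, ?_, (r • (x -ᵥ o)) +ᵥ o, ?_, ?_⟩, hyns, hzns⟩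
  · exact left_mem_affineSpan_pair ℝ o x
  · exact vadd_left_mem_affineSpan_pair.2 ⟨r, rfl⟩
  · have hzz : z -ᵥ ((r • (x -ᵥ o)) +ᵥ o) = t • w₁ := by
      rw [vsub_vadd_eq_vsub_sub, ← hw₂, ← hv, hrt]; abel
    rw [hzz, ← hw₁]
    exact SameRay.sameRay_nonneg_smul_right w₁ ht.le

theorem stmt_9 (o x y z : EuclideanSpace ℝ (Fin 2))
    (hox : o ≠ x) (hoy : o ≠ y) (hoz : o ≠ z)
    (h : π ≤ ∠ y o x + ∠ x o z)
    (hside : ¬ (affineSpan ℝ ({o, x} : Set (EuclideanSpace ℝ (Fin 2)))).SSameSide y z) :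
    ∠ x o y + ∠ y o z + ∠ z o x = 2 * π := by
  have hxo : x ≠ o := hox.symm
  have hyo : y ≠ o := hoy.symm
  have hzo : z ≠ o := hoz.symm
  set A := ∡ x o y with hA
  set B := ∡ x o z with hB
  set a := A.toReal with ha
  set b := B.toReal with hb
  have ha1 : -π < a := A.neg_pi_lt_toReal
  have ha2 : a ≤ π := A.toReal_le_pi
  have hb1 : -π < b := B.neg_pi_lt_toReal
  have hb2 : b ≤ π := B.toReal_le_pi
  have haxy : ∠ x o y = |a| := angle_eq_abs_oangle_toReal hxo hyo
  have haxz : ∠ x o z = |b| := angle_eq_abs_oangle_toReal hxo hzo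
  have hazx : ∠ z o x = |b| := by rw [angle_comm]; exact haxz
  have hayx : ∠ y o x = |a| := by rw [angle_comm]; exact haxy
  have hYZ : ∡ y o z = ((b - a : ℝ) : Real.Angle) := by
    have hadd := oangle_add hyo hxo hzo (p := o)
    have h2 : ∡ y o x = -A := by rw [hA, oangle_rev]
    rw [h2] at hadd
    rw [← hadd, ← hB, Real.Angle.coe_sub, ha, hb, Real.Angle.coe_toReal,
      Real.Angle.coe_toReal]
    abel
  have hayz : ∠ y o z = |((b - a : ℝ) : Real.Angle).toReal| := by
    rw [angle_eq_abs_oangle_toReal hyo hzo, hYZ]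
  rw [hayx, haxz] at h
  rw [haxy, hayz, hazx]
  have hkey : A.sign = B.sign → A.sign = 0 := by
    intro hc
    by_contra hc0
    exact hside (aux_side o x y z hc hc0)
  -- the two `π` cases
  have hcase_pi_a : a = π → |a| + |((b - a : ℝ) : Real.Angle).toReal| + |b| = 2 * π := by
    intro hπa
    rw [hπa]
    rcases le_or_gt 0 b with hb0 | hb0
    · have habs : |((b - π : ℝ) : Real.Angle).toReal| = π - b := by
        rcases eq_or_lt_of_le hb0 with heq | hb0'
        · rw [← heq]
          have := aux_abs_toReal_low (c := (0:ℝ) - π) (by linarith [Real.pi_pos]) (by linarith)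
          rw [this]; ring
        · rw [Real.Angle.toReal_coe_eq_self_iff.2 ⟨by linarith, by linarith [Real.pi_pos]⟩]
          rw [abs_of_nonpos (by linarith)]; ring
      rw [habs, abs_of_pos Real.pi_pos, abs_of_nonneg hb0]; ring
    · have habs : |((b - π : ℝ) : Real.Angle).toReal| = 2 * π + (b - π) :=
        aux_abs_toReal_low (by linarith) (by linarith)
      rw [habs, abs_of_pos Real.pi_pos, abs_of_neg hb0]; ring
  have hcase_pi_b : b = π → |a| + |((b - a : ℝ) : Real.Angle).toReal| + |b| = 2 * π := by
    intro hπb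
    rw [hπb]
    rcases le_or_gt 0 a with ha0 | ha0
    · have habs : |((π - a : ℝ) : Real.Angle).toReal| = π - a := by
        rw [Real.Angle.toReal_coe_eq_self_iff.2 ⟨by linarith, by linarith⟩]
        exact abs_of_nonneg (by linarith)
      rw [habs, abs_of_pos Real.pi_pos, abs_of_nonneg ha0]; ring
    · have habs : |((π - a : ℝ) : Real.Angle).toReal| = 2 * π - (π - a) :=
        aux_abs_toReal_high (by linarith) (by linarith)
      rw [habs, abs_of_pos Real.pi_pos, abs_of_neg ha0]; ring
  by_cases hAs : A.sign = 0
  · rcases Real.Angle.sign_eq_zero_iff.1 hAs with hA0 | hApi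
    · -- A = 0, so a = 0 and then b = π
      have ha0 : a = 0 := by rw [ha, hA0, Real.Angle.toReal_zero]
      have hbpi : b = π := by
        rw [ha0, abs_zero, zero_add] at h
        have habs : |b| = π := le_antisymm (abs_le.2 ⟨hb1.le, hb2⟩) h
        rcases (abs_eq Real.pi_pos.le).1 habs with h' | h'
        · exact h'
        · exact absurd h' (by linarith)
      exact hcase_pi_b hbpi
    · exact hcase_pi_a (by rw [ha, hApi, Real.Angle.toReal_pi])
  · by_cases hBs : B.sign = 0
    · rcases Real.Angle.sign_eq_zero_iff.1 hBs with hB0 | hBpi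
      · have hb0 : b = 0 := by rw [hb, hB0, Real.Angle.toReal_zero]
        have hapi : a = π := by
          rw [hb0, abs_zero, add_zero] at h
          have habs : |a| = π := le_antisymm (abs_le.2 ⟨ha1.le, ha2⟩) h
          rcases (abs_eq Real.pi_pos.le).1 habs with h' | h'
          · exact h'
          · exact absurd h' (by linarith)
        exact hcase_pi_a hapi
      · exact hcase_pi_b (by rw [hb, hBpi, Real.Angle.toReal_pi])
    · -- both signs nonzero, hence opposite
      have hABs : A.sign ≠ B.sign := fun hc => hAs (hkey hc)
      have hAnpi : A ≠ ↑π := fun hc => hAs (by rw [hc]; exact Real.Angle.sign_coe_pi)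
      have hBnpi : B ≠ ↑π := fun hc => hBs (by rw [hc]; exact Real.Angle.sign_coe_pi)
      have hsa : SignType.sign a = A.sign := Real.Angle.sign_toReal hAnpi
      have hsb : SignType.sign b = B.sign := Real.Angle.sign_toReal hBnpi
      have hanpi : a ≠ π := fun hc => hAnpi (by rw [ha] at hc; exact Real.Angle.toReal_eq_pi_iff.1 hc)
      have hbnpi : b ≠ π := fun hc => hBnpi (by rw [hb] at hc; exact Real.Angle.toReal_eq_pi_iff.1 hc)
      have ha2' : a < π := lt_of_le_of_ne ha2 hanpi
      have hb2' : b < π := lt_of_le_of_ne hb2 hbnpi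
      have hane : a ≠ 0 := by
        intro hc
        exact hAs (by rw [← hsa, hc, _root_.sign_zero])
      have hbne : b ≠ 0 := by
        intro hc
        exact hBs (by rw [← hsb, hc, _root_.sign_zero])
      rcases lt_or_gt_of_ne hane with haneg | hapos
      · -- a < 0, so b > 0
        have hbpos : 0 < b := by
          rcases lt_or_gt_of_ne hbne with hbneg | hbpos
          · exfalso
            apply hABs
            rw [← hsa, ← hsb, sign_neg haneg, sign_neg hbneg]
          · exact hbpos
        rw [abs_of_neg haneg, abs_of_pos hbpos] at h ⊢
        have habs : |((b - a : ℝ) : Real.Angle).toReal| = 2 * π - (b - a) :=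
          aux_abs_toReal_high (by linarith) (by linarith)
        rw [habs]; ring
      · -- a > 0, so b < 0
        have hbneg : b < 0 := by
          rcases lt_or_gt_of_ne hbne with hbneg | hbpos
          · exact hbneg
          · exfalso
            apply hABs
            rw [← hsa, ← hsb, sign_pos hapos, sign_pos hbpos]
        rw [abs_of_pos hapos, abs_of_neg hbneg] at h ⊢
        have habs : |((b - a : ℝ) : Real.Angle).toReal| = 2 * π + (b - a) :=
          aux_abs_toReal_low (by linarith) (by linarith)
        rw [habs]; ring
end
end

section
/- Generalized Alexandrov lemma, Euclidean case (Lemma 4.1, κ = 0): let x, y, z, w, x', y', z', w' be points in the Euclidean plane with ‖x-y‖ = ‖x'-y'‖, ‖y-z‖ = ‖y'-z'‖, ‖z-w‖ = ‖z'-w'‖, ‖w-x‖ = ‖w'-x'‖, and ‖y-w‖ ≤ ‖y'-w'‖. Whenever x, y, z, w are pairwise such that x≠y, x≠z, x≠w, y≠z, z≠w, assume π ≤ ∠yzx + ∠xzw and that y and w do not lie strictly on the same side of the line through x and z. Then ‖x-z‖ ≤ ‖x'-z'‖. -/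
section AlexandrovAux
open Real InnerProductGeometry
open scoped RealInnerProductSpace

noncomputable def cross (u v : EuclideanSpace ℝ (Fin 2)) : ℝ := u 0 * v 1 - u 1 * v 0

lemma inner_coords (u v : EuclideanSpace ℝ (Fin 2)) : ⟪u, v⟫ = u 0 * v 0 + u 1 * v 1 := by
  simp [PiLp.inner_apply, Fin.sum_univ_two, mul_comm]

lemma sin_angle_cross (u v : EuclideanSpace ℝ (Fin 2)) :
    Real.sin (angle u v) * (‖u‖ * ‖v‖) = |cross u v| := by
  rw [sin_angle_mul_norm_mul_norm,
    show ⟪u, u⟫ * ⟪v, v⟫ - ⟪u, v⟫ * ⟪u, v⟫ = (cross u v) ^ 2 by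
      simp only [inner_coords, cross]; ring]
  exact Real.sqrt_sq_eq_abs _

lemma collin (u v : EuclideanSpace ℝ (Fin 2)) (hu : u ≠ 0) (h : cross u v = 0) :
    ∃ s : ℝ, v = s • u := by
  by_cases h0 : u 0 = 0
  · have h1 : u 1 ≠ 0 := by
      intro h1; exact hu (by ext i; fin_cases i <;> simpa)
    refine ⟨v 1 / u 1, ?_⟩
    have hv0 : v 0 = 0 := by
      have := h; simp [cross, h0] at this
      rcases this with h' | h'
      · exact absurd h' h1
      · exact h'
    ext i; fin_cases i <;> simp [hv0, h0] <;> field_simp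
  · refine ⟨v 0 / u 0, ?_⟩
    have : u 0 * v 1 = u 1 * v 0 := by simp [cross] at h; linarith
    ext i; fin_cases i <;> simp <;> field_simp <;> linarith [this]

lemma cone_helper (X Y W : EuclideanSpace ℝ (Fin 2)) (hX : X ≠ 0) (hY : Y ≠ 0) (hW : W ≠ 0)
    (hc1 : 0 ≤ cross X Y) (hc2 : cross X W ≤ 0)
    (hsum : π ≤ angle Y X + angle X W) :
    ∃ l m t : ℝ, 0 ≤ l ∧ 0 ≤ m ∧ 0 ≤ t ∧ 0 < l + m + t ∧ l • Y + m • W + t • X = 0 := by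
  by_cases hdeg : cross X Y = 0 ∧ cross X W = 0
  · obtain ⟨s, hs⟩ := collin X Y hX hdeg.1
    rcases lt_trichotomy s 0 with hslt | hseq | hsgt
    · exact ⟨1, 0, -s, by norm_num, by norm_num, by linarith, by linarith, by
        rw [hs]; module⟩
    · exact absurd (by rw [hs, hseq, zero_smul]) hY
    · have ha : angle Y X = 0 := by
        rw [hs, angle_comm, angle_smul_right_of_pos _ _ hsgt, angle_self hX]
      have hb : angle X W = π :=
        le_antisymm (angle_le_pi _ _) (by linarith)
      obtain ⟨-, r, hr, hrW⟩ := angle_eq_pi_iff.mp hb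
      exact ⟨0, 1, -r, by norm_num, by norm_num, by linarith, by linarith, by
        rw [hrW]; module⟩
  · -- main case
    set a := angle Y X with ha
    set b := angle X W with hb
    have hXn : (0:ℝ) < ‖X‖ := norm_pos_iff.mpr hX
    have hYn : (0:ℝ) < ‖Y‖ := norm_pos_iff.mpr hY
    have hWn : (0:ℝ) < ‖W‖ := norm_pos_iff.mpr hW
    have hsa : Real.sin a * (‖X‖ * ‖Y‖) = cross X Y := by
      rw [ha, angle_comm, sin_angle_cross, abs_of_nonneg hc1]
    have hsb : Real.sin b * (‖X‖ * ‖W‖) = -cross X W := by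
      rw [hb, sin_angle_cross, abs_of_nonpos hc2]
    have hca : Real.cos a * (‖Y‖ * ‖X‖) = ⟪Y, X⟫ := cos_angle_mul_norm_mul_norm _ _
    have hcb : Real.cos b * (‖X‖ * ‖W‖) = ⟪X, W⟫ := cos_angle_mul_norm_mul_norm _ _
    have hab2 : a + b ≤ 2 * π := by
      have := angle_le_pi Y X; have := angle_le_pi X W; rw [← ha, ← hb] at *; linarith
    have hsinab : Real.sin (a + b) ≤ 0 := by
      have h1 : 0 ≤ Real.sin (a + b - π) :=
        Real.sin_nonneg_of_nonneg_of_le_pi (by linarith) (by linarith)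
      rw [Real.sin_sub_pi] at h1; linarith
    -- key identity: cross Y W * ‖X‖^2 = -(sin(a+b)) * ‖X‖^2 * ‖Y‖ * ‖W‖
    have hid : cross Y W * (‖X‖ * ‖X‖) =
        -(cross X Y * ⟪X, W⟫) + ⟪Y, X⟫ * cross X W := by
      have hn : ‖X‖ * ‖X‖ = ⟪X, X⟫ := (real_inner_self_eq_norm_mul_norm X).symm
      rw [hn]; simp only [inner_coords, cross]; ring
    have e1 : Real.sin a * Real.cos b * (‖X‖ * ‖X‖ * (‖Y‖ * ‖W‖)) =
        cross X Y * ⟪X, W⟫ := by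
      calc Real.sin a * Real.cos b * (‖X‖ * ‖X‖ * (‖Y‖ * ‖W‖))
          = (Real.sin a * (‖X‖ * ‖Y‖)) * (Real.cos b * (‖X‖ * ‖W‖)) := by ring
        _ = cross X Y * ⟪X, W⟫ := by rw [hsa, hcb]
    have e2 : Real.cos a * Real.sin b * (‖X‖ * ‖X‖ * (‖Y‖ * ‖W‖)) =
        ⟪Y, X⟫ * (-cross X W) := by
      calc Real.cos a * Real.sin b * (‖X‖ * ‖X‖ * (‖Y‖ * ‖W‖))
          = (Real.cos a * (‖Y‖ * ‖X‖)) * (Real.sin b * (‖X‖ * ‖W‖)) := by ring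
        _ = ⟪Y, X⟫ * (-cross X W) := by rw [hca, hsb]
    have hsum' : Real.sin (a + b) * (‖X‖ * ‖X‖ * (‖Y‖ * ‖W‖)) =
        - (cross Y W * (‖X‖ * ‖X‖)) := by
      rw [Real.sin_add]
      linear_combination e1 + e2 + hid
    have Npos : (0:ℝ) < ‖X‖ * ‖X‖ * (‖Y‖ * ‖W‖) := by positivity
    have hge : 0 ≤ (- Real.sin (a + b)) * (‖X‖ * ‖X‖ * (‖Y‖ * ‖W‖)) :=
      mul_nonneg (neg_nonneg.mpr hsinab) Npos.le
    have hc3 : 0 ≤ cross Y W := by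
      nlinarith [hsum', hge, mul_pos hXn hXn]
    have hne : 0 < cross X Y ∨ cross X W < 0 := by
      rcases hc1.eq_or_lt with h | h
      · right; rcases hc2.lt_or_eq with h' | h'
        · exact h'
        · exact absurd ⟨h.symm, h'⟩ hdeg
      · left; exact h
    refine ⟨-(cross X W), cross X Y, cross Y W, by linarith, hc1, hc3, by
        rcases hne with h | h <;> linarith, ?_⟩
    ext i; fin_cases i <;> simp [cross] <;> ring

lemma ssameside_of_cross (x z y w : EuclideanSpace ℝ (Fin 2))
    (hc : 0 < cross (x - z) (y - z) * cross (x - z) (w - z)) :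
    (affineSpan ℝ ({x, z} : Set (EuclideanSpace ℝ (Fin 2)))).SSameSide y w := by
  set X := x - z with hX
  set Y := y - z with hY
  set W := w - z with hW
  have hc1 : cross X Y ≠ 0 := by rintro h; rw [h] at hc; simp at hc
  have hc2 : cross X W ≠ 0 := by rintro h; rw [h] at hc; simp at hc
  have hXne : X ≠ 0 := by
    rintro h; rw [h] at hc1; simp [cross] at hc1
  have hn : (0:ℝ) < X 0 ^ 2 + X 1 ^ 2 := by
    rcases (by rintro ⟨h0, h1⟩; exact hXne (by ext i; fin_cases i <;> simpa) :
        ¬ (X 0 = 0 ∧ X 1 = 0)) with h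
    rcases eq_or_ne (X 0) 0 with h0 | h0
    · have h1 : X 1 ≠ 0 := fun h1 => h ⟨h0, h1⟩
      positivity
    · positivity
  set n : ℝ := X 0 ^ 2 + X 1 ^ 2 with hn'
  set s₁ : ℝ := (X 0 * Y 0 + X 1 * Y 1) / n with hs₁
  set s₂ : ℝ := (X 0 * W 0 + X 1 * W 1) / n with hs₂
  have hmem : ∀ r : ℝ, AffineMap.lineMap z x r ∈ affineSpan ℝ ({x, z} : Set (EuclideanSpace ℝ (Fin 2))) := by
    intro r; rw [Set.pair_comm]; exact AffineMap.lineMap_mem_affineSpan_pair r z x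
  have hnotmem : ∀ v : EuclideanSpace ℝ (Fin 2), cross X (v - z) ≠ 0 →
      v ∉ affineSpan ℝ ({x, z} : Set (EuclideanSpace ℝ (Fin 2))) := by
    intro v hcv hv
    have hz : z ∈ affineSpan ℝ ({x, z} : Set (EuclideanSpace ℝ (Fin 2))) :=
      mem_affineSpan ℝ (by simp)
    have hd := AffineSubspace.vsub_mem_direction hv hz
    rw [direction_affineSpan, vectorSpan_pair] at hd
    obtain ⟨r, hr⟩ := Submodule.mem_span_singleton.mp hd
    apply hcv
    have hvz : v - z = r • X := hr.symm
    rw [hvz]; simp [cross]; ring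
  have key : ∀ v : EuclideanSpace ℝ (Fin 2),
      v - AffineMap.lineMap z x ((X 0 * (v - z) 0 + X 1 * (v - z) 1) / n)
        = (cross X (v - z) / n) • ![-(X 1), X 0] := by
    intro v
    have : AffineMap.lineMap z x ((X 0 * (v - z) 0 + X 1 * (v - z) 1) / n)
        = ((X 0 * (v - z) 0 + X 1 * (v - z) 1) / n) • X + z := by
      simp [AffineMap.lineMap_apply, hX]
    rw [this]
    ext i
    fin_cases i <;>
      · show v _ - (((X 0 * (v - z) 0 + X 1 * (v - z) 1) / n) * X _ + z _) = _
        simp only [cross, Fin.zero_eta, Fin.mk_one, Pi.smul_apply, Matrix.cons_val_zero, Matrix.cons_val_one, Matrix.head_cons,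
          PiLp.smul_apply, smul_eq_mul, PiLp.sub_apply]
        field_simp
        ring
  refine ⟨⟨AffineMap.lineMap z x s₁, hmem s₁, AffineMap.lineMap z x s₂, hmem s₂, ?_⟩,
    hnotmem y hc1, hnotmem w hc2⟩
  have hy' := key y
  have hw' := key w
  rw [← hY] at hy'
  rw [← hW] at hw'
  have hray : (w : EuclideanSpace ℝ (Fin 2)) -ᵥ AffineMap.lineMap z x s₂
      = (cross X W / cross X Y) • (y -ᵥ AffineMap.lineMap z x s₁) := by
    show w - AffineMap.lineMap z x s₂ = (cross X W / cross X Y) • (y - AffineMap.lineMap z x s₁)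
    apply WithLp.ofLp_injective
    simp only [WithLp.ofLp_sub, WithLp.ofLp_smul]
    rw [hy', hw', smul_smul]
    congr 1
    field_simp
  rw [hray]
  exact SameRay.sameRay_nonneg_smul_right _ (le_of_lt (by
    have : cross X W / cross X Y = cross X Y * cross X W / (cross X Y)^2 := by
      field_simp
    rw [this]; positivity))

lemma arith_final (l m t D D' : ℝ) (hlm' : 0 < l + m) (ht : 0 ≤ t)
    (hD : 0 ≤ D) (hD' : 0 ≤ D')
    (key : (l + m) * D ^ 2 + 2 * (t * D ^ 2) ≤ (l + m) * D' ^ 2 + 2 * (D' * (t * D))) :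
    D ≤ D' := by
  by_contra hcon
  push_neg at hcon
  have hsq : 0 < D ^ 2 - D' ^ 2 := by nlinarith
  nlinarith [key, mul_pos hlm' hsq,
    mul_nonneg (mul_nonneg ht hD) (le_of_lt (sub_pos.mpr hcon))]

lemma main_calc (X Y W X' Y' W' : EuclideanSpace ℝ (Fin 2))
    (hY : ‖Y‖ = ‖Y'‖) (hW : ‖W‖ = ‖W'‖)
    (e1 : ‖X - Y‖ = ‖X' - Y'‖) (e2 : ‖W - X‖ = ‖W' - X'‖)
    (e5 : ‖Y - W‖ ≤ ‖Y' - W'‖)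
    (l m t : ℝ) (hl : 0 ≤ l) (hm : 0 ≤ m) (ht : 0 ≤ t) (hsum : 0 < l + m + t)
    (hrel : l • Y + m • W + t • X = 0) : ‖X‖ ≤ ‖X'‖ := by
  have hY2 : ‖Y‖ ^ 2 = ‖Y'‖ ^ 2 := by rw [hY]
  have hW2 : ‖W‖ ^ 2 = ‖W'‖ ^ 2 := by rw [hW]
  have q1 : ‖X - Y‖ ^ 2 = ‖X' - Y'‖ ^ 2 := by rw [e1]
  have q2 : ‖W - X‖ ^ 2 = ‖W' - X'‖ ^ 2 := by rw [e2]
  have q5 : ‖Y - W‖ ^ 2 ≤ ‖Y' - W'‖ ^ 2 := by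
    have := pow_le_pow_left₀ (norm_nonneg _) e5 2
    simpa using this
  simp only [norm_sub_sq_real] at q1 q2 q5
  have E1 : ‖X‖ ^ 2 - 2 * ⟪X, Y⟫ = ‖X'‖ ^ 2 - 2 * ⟪X', Y'⟫ := by linarith
  have E2 : ‖X‖ ^ 2 - 2 * ⟪X, W⟫ = ‖X'‖ ^ 2 - 2 * ⟪X', W'⟫ := by
    have h1 : ⟪W, X⟫ = ⟪X, W⟫ := real_inner_comm _ _
    have h2 : ⟪W', X'⟫ = ⟪X', W'⟫ := real_inner_comm _ _
    linarith
  have E5 : ⟪Y', W'⟫ ≤ ⟪Y, W⟫ := by linarith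
  by_cases hlm : l + m = 0
  · have hl0 : l = 0 := by linarith
    have hm0 : m = 0 := by linarith
    have ht0 : 0 < t := by linarith
    rw [hl0, hm0] at hrel
    simp at hrel
    rcases hrel with h | h
    · exact absurd h (ne_of_gt ht0)
    · rw [h]; simp [norm_nonneg]
  · have hlm' : 0 < l + m := lt_of_le_of_ne (by linarith) (Ne.symm hlm)
    have hV : l • Y + m • W = -(t • X) := by
      exact eq_neg_of_add_eq_zero_left hrel
    have hXV : ⟪X, l • Y + m • W⟫ = -(t * ‖X‖ ^ 2) := by
      rw [hV, inner_neg_right, real_inner_smul_right, real_inner_self_eq_norm_sq]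
    have hnormVsq : ‖l • Y + m • W‖ ^ 2 = t ^ 2 * ‖X‖ ^ 2 := by
      rw [hV, norm_neg, norm_smul]
      rw [Real.norm_eq_abs, abs_of_nonneg ht, mul_pow]
    -- expand norms of combinations
    have expand : ∀ (A B : EuclideanSpace ℝ (Fin 2)),
        ‖l • A + m • B‖ ^ 2 = l ^ 2 * ‖A‖ ^ 2 + 2 * (l * m * ⟪A, B⟫) + m ^ 2 * ‖B‖ ^ 2 := by
      intro A B
      rw [norm_add_sq_real, norm_smul, norm_smul, real_inner_smul_left, real_inner_smul_right,
        Real.norm_eq_abs, Real.norm_eq_abs, abs_of_nonneg hl, abs_of_nonneg hm, mul_pow, mul_pow]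
      ring
    have hV'sq : ‖l • Y' + m • W'‖ ^ 2 ≤ t ^ 2 * ‖X‖ ^ 2 := by
      rw [expand]
      rw [expand] at hnormVsq
      nlinarith [mul_nonneg hl hm]
    have hV'le : ‖l • Y' + m • W'‖ ≤ t * ‖X‖ := by
      have hb : (t * ‖X‖) ^ 2 = t ^ 2 * ‖X‖ ^ 2 := by ring
      have := hV'sq
      rw [← hb] at this
      exact (pow_le_pow_iff_left₀ (norm_nonneg _) (mul_nonneg ht (norm_nonneg X)) (by norm_num)).mp this
    have hinner' : -⟪X', l • Y' + m • W'⟫ ≤ ‖X'‖ * (t * ‖X‖) := by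
      have h1 : -⟪X', l • Y' + m • W'⟫ ≤ ‖X'‖ * ‖l • Y' + m • W'‖ := by
        have := abs_real_inner_le_norm X' (l • Y' + m • W')
        have := neg_abs_le (⟪X', l • Y' + m • W'⟫ : ℝ)
        linarith
      have h2 := mul_le_mul_of_nonneg_left hV'le (norm_nonneg X')
      linarith
    have comb : (l + m) * ‖X‖ ^ 2 - 2 * (l * ⟪X, Y⟫ + m * ⟪X, W⟫)
        = (l + m) * ‖X'‖ ^ 2 - 2 * (l * ⟪X', Y'⟫ + m * ⟪X', W'⟫) := by
      linear_combination l * E1 + m * E2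
    have hXVexp : ⟪X, l • Y + m • W⟫ = l * ⟪X, Y⟫ + m * ⟪X, W⟫ := by
      rw [inner_add_right, real_inner_smul_right, real_inner_smul_right]
    have hXVexp' : ⟪X', l • Y' + m • W'⟫ = l * ⟪X', Y'⟫ + m * ⟪X', W'⟫ := by
      rw [inner_add_right, real_inner_smul_right, real_inner_smul_right]
    have key : (l + m) * ‖X‖ ^ 2 + 2 * (t * ‖X‖ ^ 2)
        ≤ (l + m) * ‖X'‖ ^ 2 + 2 * (‖X'‖ * (t * ‖X‖)) := by
      have := hXV
      rw [hXVexp] at this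
      linarith [comb, hinner']
    exact arith_final l m t ‖X‖ ‖X'‖ hlm' ht (norm_nonneg X) (norm_nonneg X') key

end AlexandrovAux

open EuclideanGeometry Real

theorem stmt_10 (x y z w x' y' z' w' : EuclideanSpace ℝ (Fin 2))
    (h1 : ‖x - y‖ = ‖x' - y'‖) (h2 : ‖y - z‖ = ‖y' - z'‖)
    (h3 : ‖z - w‖ = ‖z' - w'‖) (h4 : ‖w - x‖ = ‖w' - x'‖)
    (h5 : ‖y - w‖ ≤ ‖y' - w'‖)
    (hangle : x ≠ y → x ≠ z → x ≠ w → y ≠ z → z ≠ w →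
      π ≤ ∠ y z x + ∠ x z w ∧
        ¬ (affineSpan ℝ ({x, z} : Set (EuclideanSpace ℝ (Fin 2)))).SSameSide y w) :
    ‖x - z‖ ≤ ‖x' - z'‖ := by
  by_cases hxz : x = z
  · subst hxz; simp
  by_cases hxy : x = y
  · subst hxy
    have hx'y' : x' = y' := norm_sub_eq_zero_iff.mp (by rw [← h1]; simp)
    rw [hx'y']
    exact le_of_eq h2
  by_cases hyz : y = z
  · subst hyz
    have hy'z' : y' = z' := norm_sub_eq_zero_iff.mp (by rw [← h2]; simp)
    rw [← hy'z']
    exact le_of_eq h1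
  by_cases hxw : x = w
  · subst hxw
    have hw'x' : w' = x' := norm_sub_eq_zero_iff.mp (by rw [← h4]; simp)
    exact le_of_eq (calc ‖x - z‖ = ‖z - x‖ := norm_sub_rev _ _
      _ = ‖z' - w'‖ := h3
      _ = ‖z' - x'‖ := by rw [hw'x']
      _ = ‖x' - z'‖ := norm_sub_rev _ _)
  by_cases hzw : z = w
  · subst hzw
    have hz'w' : z' = w' := norm_sub_eq_zero_iff.mp (by rw [← h3]; simp)
    exact le_of_eq (calc ‖x - z‖ = ‖z - x‖ := norm_sub_rev _ _
      _ = ‖w' - x'‖ := h4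
      _ = ‖z' - x'‖ := by rw [hz'w']
      _ = ‖x' - z'‖ := norm_sub_rev _ _)
  obtain ⟨hang, hside⟩ := hangle hxy hxz hxw hyz hzw
  set X := x - z with hX
  set Y := y - z with hY
  set W := w - z with hW
  have hXne : X ≠ 0 := sub_ne_zero.mpr hxz
  have hYne : Y ≠ 0 := sub_ne_zero.mpr hyz
  have hWne : W ≠ 0 := sub_ne_zero.mpr (Ne.symm hzw)
  have hang' : π ≤ InnerProductGeometry.angle Y X + InnerProductGeometry.angle X W := hang
  have hcross : cross X Y * cross X W ≤ 0 := by
    by_contra h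
    push_neg at h
    exact hside (ssameside_of_cross x z y w h)
  have e1 : ‖X - Y‖ = ‖(x' - z') - (y' - z')‖ := by
    rw [sub_sub_sub_cancel_right, sub_sub_sub_cancel_right]; exact h1
  have e2 : ‖W - X‖ = ‖(w' - z') - (x' - z')‖ := by
    rw [sub_sub_sub_cancel_right, sub_sub_sub_cancel_right]; exact h4
  have e5 : ‖Y - W‖ ≤ ‖(y' - z') - (w' - z')‖ := by
    rw [sub_sub_sub_cancel_right, sub_sub_sub_cancel_right]; exact h5
  have hYn : ‖Y‖ = ‖y' - z'‖ := h2
  have hWn : ‖W‖ = ‖w' - z'‖ := by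
    rw [hW, ← norm_sub_rev z w, ← norm_sub_rev z' w']; exact h3
  rcases mul_nonpos_iff.mp hcross with ⟨hc1, hc2⟩ | ⟨hc1, hc2⟩
  · obtain ⟨l, m, t, hl, hm, ht, hsum, hrel⟩ := cone_helper X Y W hXne hYne hWne hc1 hc2 hang'
    exact main_calc X Y W (x' - z') (y' - z') (w' - z') hYn hWn e1 e2 e5 l m t hl hm ht hsum hrel
  · obtain ⟨l, m, t, hl, hm, ht, hsum, hrel⟩ := cone_helper X W Y hXne hWne hYne hc2 hc1 (by
      rw [InnerProductGeometry.angle_comm W X, InnerProductGeometry.angle_comm X Y]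
      linarith)
    refine main_calc X Y W (x' - z') (y' - z') (w' - z') hYn hWn e1 e2 e5 m l t hm hl ht
      (by linarith) ?_
    rwa [add_comm (l • W) (m • Y)] at hrel
end

section
/- Euclidean case of Corollary 4.3: let x, y, z, w, x', y', z', w' be points in the Euclidean plane satisfying ‖x-y‖ = ‖x'-y'‖, ‖y-z‖ = ‖y'-z'‖, ‖z-w‖ = ‖z'-w'‖, ‖w-x‖ = ‖w'-x'‖, ‖x'-z'‖ ≤ ‖x-z‖, and suppose the segments [x',z'] and [y',w'] intersect. If moreover x ≠ z and y and w do not lie strictly on the same side of the line through x and z, then the segments [x,z] and [y,w] intersect. -/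
set_option maxHeartbeats 1000000
open scoped RealInnerProductSpace

noncomputable abbrev CEuc := EuclideanSpace ℝ (Fin 2)

private lemma iden (u a b : CEuc) :
    2*(‖b‖*⟪u,a⟫ + ‖a‖*⟪u,b⟫) =
      (‖a‖+‖b‖)*‖u‖^2 + ‖a‖^2*‖b‖ + ‖a‖*‖b‖^2 - ‖u-a‖^2*‖b‖ - ‖b-u‖^2*‖a‖ := by
  rw [norm_sub_sq_real, norm_sub_sq_real, real_inner_comm b u]
  ring

private lemma cross_nonneg (x' y' z' w' : CEuc)
    (hint : (segment ℝ x' z' ∩ segment ℝ y' w').Nonempty) :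
    0 ≤ ‖w' - z'‖ * ⟪x' - z', y' - z'⟫ + ‖y' - z'‖ * ⟪x' - z', w' - z'⟫ := by
  obtain ⟨q, hq1, hq2⟩ := hint
  obtain ⟨s1, s2, hs1, hs2, hs, hq⟩ := hq1
  obtain ⟨r1, r2, hr1, hr2, hr, hq'⟩ := hq2
  set u := x' - z' with hu
  set a := y' - z' with ha
  set b := w' - z' with hb
  have hs2' : s2 = 1 - s1 := by linarith
  have hr2' : r2 = 1 - r1 := by linarith
  have hqz : q - z' = s1 • u := by rw [← hq, hs2', hu]; module
  have hqz2 : q - z' = r1 • a + r2 • b := by rw [← hq', hr2', ha, hb]; module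
  have key : s1 • u = r1 • a + r2 • b := by rw [← hqz, hqz2]
  have hip : -(‖a‖ * ‖b‖) ≤ ⟪a, b⟫ := by
    have h1 := abs_real_inner_le_norm a b
    have h2 := neg_abs_le (⟪a, b⟫ : ℝ)
    linarith
  rcases eq_or_lt_of_le hs1 with hs1e | hs1p
  · -- s1 = 0 : z' = q ∈ [y', w']
    have h0 : r1 • a + r2 • b = 0 := by rw [← key, ← hs1e]; simp
    rcases eq_or_lt_of_le hr1 with hr1e | hr1p
    · have hb0 : b = 0 := by
        have h2 : r2 = 1 := by linarith [hr1e]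
        rw [← hr1e, h2] at h0; simpa using h0
      simp [hb0]
    · rcases eq_or_lt_of_le hr2 with hr2e | hr2p
      · have ha0 : a = 0 := by
          have h2 : r1 = 1 := by linarith [hr2e]
          rw [← hr2e, h2] at h0; simpa using h0
        simp [ha0]
      · have hra : r1 • a = (-r2) • b := by
          rw [add_eq_zero_iff_eq_neg] at h0
          rw [h0, ← neg_smul]
        have hab : a = (-(r2/r1)) • b := by
          have : r1⁻¹ • (r1 • a) = r1⁻¹ • ((-r2) • b) := by rw [hra]
          rw [inv_smul_smul₀ (ne_of_gt hr1p), smul_smul] at this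
          rw [this]; congr 1; field_simp
        have hna : ‖a‖ = (r2/r1) * ‖b‖ := by
          rw [hab, norm_smul, Real.norm_eq_abs, abs_neg, abs_of_pos (div_pos hr2p hr1p)]
        have hz : ‖b‖ * ⟪u, a⟫ + ‖a‖ * ⟪u, b⟫ = 0 := by
          rw [hna, hab, real_inner_smul_right]; ring
        rw [hz]
  · -- s1 > 0
    have e1 : s1 * (‖b‖ * ⟪u, a⟫ + ‖a‖ * ⟪u, b⟫)
        = r1 * ‖b‖ * ‖a‖^2 + r2 * ‖a‖ * ‖b‖^2 + (r2 * ‖b‖ + r1 * ‖a‖) * ⟪a, b⟫ := by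
      have c1 : ⟪s1 • u, a⟫ = r1 * ‖a‖^2 + r2 * ⟪a, b⟫ := by
        rw [key, inner_add_left, real_inner_smul_left, real_inner_smul_left,
          real_inner_self_eq_norm_sq, real_inner_comm b a]
      have c2 : ⟪s1 • u, b⟫ = r1 * ⟪a, b⟫ + r2 * ‖b‖^2 := by
        rw [key, inner_add_left, real_inner_smul_left, real_inner_smul_left,
          real_inner_self_eq_norm_sq]
      rw [real_inner_smul_left] at c1 c2
      linear_combination ‖b‖ * c1 + ‖a‖ * c2
    have e2 : 0 ≤ s1 * (‖b‖ * ⟪u, a⟫ + ‖a‖ * ⟪u, b⟫) := by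
      rw [e1]
      nlinarith [mul_nonneg (mul_nonneg hr2 (norm_nonneg b)) (norm_nonneg a),
        mul_nonneg (mul_nonneg hr1 (norm_nonneg a)) (norm_nonneg b),
        mul_nonneg hr1 (norm_nonneg a), mul_nonneg hr2 (norm_nonneg b)]
    exact nonneg_of_mul_nonneg_right e2 hs1p

private lemma aux (x y z w x' y' z' w' p : CEuc)
    (h1 : ‖x - y‖ = ‖x' - y'‖) (h2 : ‖y - z‖ = ‖y' - z'‖)
    (h3 : ‖z - w‖ = ‖z' - w'‖) (h4 : ‖w - x‖ = ‖w' - x'‖)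
    (h5 : ‖x' - z'‖ ≤ ‖x - z‖)
    (hint : (segment ℝ x' z' ∩ segment ℝ y' w').Nonempty)
    (hxz : x ≠ z)
    (hp : p ∈ segment ℝ y w) (hzp : z ∈ segment ℝ x p) :
    (segment ℝ x z ∩ segment ℝ y w).Nonempty := by
  set a := y - z with ha
  set b := w - z with hb
  set B := ‖y - z‖ with hB
  set C := ‖z - w‖ with hC
  have hCb : C = ‖b‖ := by rw [hC, hb, norm_sub_rev]
  have hBa : B = ‖a‖ := rfl
  -- primed E' nonneg
  have hE' : 0 ≤ C * ⟪x' - z', y' - z'⟫ + B * ⟪x' - z', w' - z'⟫ := by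
    have := cross_nonneg x' y' z' w' hint
    rwa [← h2, show ‖w' - z'‖ = ‖z' - w'‖ from norm_sub_rev _ _, ← h3] at this
  -- identities
  have hid1 := iden (x - z) a b
  have hid2 := iden (x' - z') (y' - z') (w' - z')
  have e1 : (x - z) - a = x - y := by rw [ha]; abel
  have e2 : b - (x - z) = w - x := by rw [hb]; abel
  have e1' : (x' - z') - (y' - z') = x' - y' := by abel
  have e2' : (w' - z') - (x' - z') = w' - x' := by abel
  rw [e1, e2] at hid1
  rw [e1', e2', ← h1, ← h4, ← h2, show ‖w' - z'‖ = ‖z' - w'‖ from norm_sub_rev _ _, ← h3] at hid2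
  -- hid1 : 2*(C⟪x-z,a⟫+B⟪x-z,b⟫) = (B+C)P² + ... (with ‖a‖ = B, ‖b‖ = C syntactically?)
  rw [← hBa, ← hCb] at hid1
  -- E ≥ 0
  have hsq : ‖x' - z'‖^2 ≤ ‖x - z‖^2 := by
    have := norm_nonneg (x' - z')
    nlinarith
  have hBC0 : (0:ℝ) ≤ B + C := by positivity
  have hE : 0 ≤ C * ⟪x - z, a⟫ + B * ⟪x - z, b⟫ := by
    nlinarith [mul_nonneg hBC0 (sub_nonneg.2 hsq)]
  -- convex representations
  clear_value a b B C
  have hB0 : 0 ≤ B := hB ▸ norm_nonneg (y - z)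
  have hC0 : 0 ≤ C := hC ▸ norm_nonneg (z - w)
  obtain ⟨c1, c2, hc1, hc2, hcs, hcz⟩ := hzp
  obtain ⟨u1, u2, hu1, hu2, hus, hup⟩ := hp
  obtain ⟨α, hα⟩ : ∃ r : ℝ, r = c1 := ⟨c1, rfl⟩
  obtain ⟨β, hβ⟩ : ∃ r : ℝ, r = c2 * u1 := ⟨c2 * u1, rfl⟩
  obtain ⟨γ, hγ⟩ : ∃ r : ℝ, r = c2 * u2 := ⟨c2 * u2, rfl⟩
  have hc1' : 0 ≤ α := hα ▸ hc1
  have hβ0 : 0 ≤ β := hβ ▸ mul_nonneg hc2 hu1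
  have hγ0 : 0 ≤ γ := hγ ▸ mul_nonneg hc2 hu2
  have hsum : α + β + γ = 1 := by rw [hα, hβ, hγ]; linear_combination hcs + c2 * hus
  have h' : α • x + β • y + γ • w = z := by
    rw [← hcz, ← hup, hα, hβ, hγ]; module
  have hneg : α • (x - z) = (-β) • a + (-γ) • b := by
    rw [ha, hb]
    have : α • (x - z) + β • (y - z) + γ • (w - z)
        = (α • x + β • y + γ • w) - (α + β + γ) • z := by module
    rw [h', hsum, one_smul, sub_self] at this
    linear_combination (norm := module) this
  have hip : -(B * C) ≤ ⟪a, b⟫ := by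
    have h1' := abs_real_inner_le_norm a b
    have h2' := neg_abs_le (⟪a, b⟫ : ℝ)
    rw [← hBa, ← hCb] at h1'
    linarith
  have k1 : α * ⟪x - z, a⟫ = -(β * B^2 + γ * ⟪a, b⟫) := by
    rw [← real_inner_smul_left, hneg, inner_add_left, real_inner_smul_left,
      real_inner_smul_left, real_inner_self_eq_norm_sq, real_inner_comm b a, ← hBa]
    ring
  have k2 : α * ⟪x - z, b⟫ = -(β * ⟪a, b⟫ + γ * C^2) := by
    rw [← real_inner_smul_left, hneg, inner_add_left, real_inner_smul_left,
      real_inner_smul_left, real_inner_self_eq_norm_sq, ← hCb]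
    ring
  have hαE : α * (C * ⟪x - z, a⟫ + B * ⟪x - z, b⟫)
      = -((γ * C + β * B) * (B * C + ⟪a, b⟫)) := by
    linear_combination C * k1 + B * k2
  have hS2 : 0 ≤ γ * C + β * B := add_nonneg (mul_nonneg hγ0 hC0) (mul_nonneg hβ0 hB0)
  have hF2 : 0 ≤ B * C + ⟪a, b⟫ := by linarith
  have hfac : (γ * C + β * B) * (B * C + ⟪a, b⟫) = 0 := by
    have hge : 0 ≤ α * (C * ⟪x - z, a⟫ + B * ⟪x - z, b⟫) := mul_nonneg hc1' hE
    nlinarith [mul_nonneg hS2 hF2]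
  -- case analysis
  have hyz_done : y = z → (segment ℝ x z ∩ segment ℝ y w).Nonempty := by
    intro hyz
    exact ⟨z, right_mem_segment ℝ x z, hyz ▸ left_mem_segment ℝ y w⟩
  have hwz_done : w = z → (segment ℝ x z ∩ segment ℝ y w).Nonempty := by
    intro hwz
    exact ⟨z, right_mem_segment ℝ x z, hwz ▸ right_mem_segment ℝ y w⟩
  by_cases hBz : B = 0
  · exact hyz_done (by rwa [hB, norm_sub_eq_zero_iff] at hBz)
  by_cases hCz : C = 0
  · exact hwz_done (by rw [hC, norm_sub_eq_zero_iff] at hCz; exact hCz.symm)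
  rcases mul_eq_zero.1 hfac with hS | hF
  · -- γC + βB = 0 with B,C ≠ 0 ⇒ β = γ = 0 ⇒ x = z, contradiction
    have hγC : γ * C = 0 := by linarith [mul_nonneg hγ0 hC0, mul_nonneg hβ0 hB0]
    have hβB : β * B = 0 := by linarith [mul_nonneg hγ0 hC0, mul_nonneg hβ0 hB0]
    have hβz : β = 0 := by
      rcases mul_eq_zero.1 hβB with h | h
      · exact h
      · exact absurd h hBz
    have hγz : γ = 0 := by
      rcases mul_eq_zero.1 hγC with h | h
      · exact h
      · exact absurd h hCz
    have hα1 : α = 1 := by rw [hβz, hγz] at hsum; linarith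
    rw [hβz, hγz, hα1, one_smul] at hneg
    simp only [neg_zero, zero_smul, add_zero] at hneg
    exact absurd (sub_eq_zero.1 hneg) hxz
  · -- BC + ⟪a,b⟫ = 0 ⇒ z ∈ [y,w]
    have habBC : ⟪a, b⟫ = -(B * C) := by linarith
    have hnorm : ‖C • a + B • b‖^2 = 0 := by
      rw [norm_add_sq_real, real_inner_smul_left, real_inner_smul_right, habBC,
        norm_smul, norm_smul, Real.norm_eq_abs, Real.norm_eq_abs,
        abs_of_nonneg hC0, abs_of_nonneg hB0, ← hBa, ← hCb]
      ring
    have hv : C • a + B • b = 0 :=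
      norm_eq_zero.1 (pow_eq_zero_iff two_ne_zero |>.1 hnorm)
    have hBCpos : 0 < B + C := by
      have := lt_of_le_of_ne hB0 (Ne.symm hBz)
      linarith
    have hzseg : z ∈ segment ℝ y w := by
      refine ⟨C / (B + C), B / (B + C), div_nonneg hC0 hBCpos.le, div_nonneg hB0 hBCpos.le, by field_simp; ring, ?_⟩
      have : (B + C) • z = C • y + B • w := by
        rw [ha, hb] at hv
        linear_combination (norm := module) -hv
      calc (C / (B+C)) • y + (B / (B+C)) • w = ((B+C)⁻¹) • (C • y + B • w) := by
            rw [smul_add, smul_smul, smul_smul]; rw [div_eq_inv_mul, div_eq_inv_mul]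
        _ = ((B+C)⁻¹) • ((B + C) • z) := by rw [this]
        _ = z := inv_smul_smul₀ (ne_of_gt hBCpos) z
    exact ⟨z, right_mem_segment ℝ x z, hzseg⟩

private lemma oppside {x z : CEuc} (hxz : x ≠ z) (y w : CEuc)
    (h : ¬ (affineSpan ℝ ({x, z} : Set CEuc)).SSameSide y w) :
    (affineSpan ℝ ({x, z} : Set CEuc)).WOppSide y w := by
  have hd : z - x ≠ 0 := sub_ne_zero.2 (Ne.symm hxz)
  have hK1 : Module.finrank ℝ ((ℝ ∙ (z - x))ᗮ : Submodule ℝ CEuc) = 1 := by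
    have h1 : Module.finrank ℝ (ℝ ∙ (z - x) : Submodule ℝ CEuc) = 1 :=
      finrank_span_singleton hd
    have h2 := Submodule.finrank_add_finrank_orthogonal (K := (ℝ ∙ (z - x) : Submodule ℝ CEuc))
    rw [h1, finrank_euclideanSpace_fin] at h2
    omega
  obtain ⟨n, hnK, hn0⟩ : ∃ n : CEuc, n ∈ (ℝ ∙ (z - x))ᗮ ∧ n ≠ 0 := by
    have hbot : ((ℝ ∙ (z - x))ᗮ : Submodule ℝ CEuc) ≠ ⊥ := by
      intro hb
      rw [hb] at hK1
      simp at hK1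
    obtain ⟨n, hn, hn0⟩ := Submodule.exists_mem_ne_zero_of_ne_bot hbot
    exact ⟨n, hn, hn0⟩
  have hspan : (ℝ ∙ n) = ((ℝ ∙ (z - x))ᗮ : Submodule ℝ CEuc) := by
    apply Submodule.eq_of_le_of_finrank_le
    · rwa [Submodule.span_singleton_le_iff_mem]
    · rw [hK1, finrank_span_singleton hn0]
  have hmem : ∀ v : CEuc, v ∈ affineSpan ℝ ({x, z} : Set CEuc) ↔ ⟪n, v - x⟫ = 0 := by
    intro v
    constructor
    · intro hv
      rw [show v = (v - x) +ᵥ x by simp] at hv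
      rw [vadd_left_mem_affineSpan_pair] at hv
      obtain ⟨r, hr⟩ := hv
      rw [vsub_eq_sub] at hr
      rw [← hr, real_inner_smul_right]
      have : ⟪z - x, n⟫ = 0 := Submodule.mem_orthogonal_singleton_iff_inner_right.1 hnK
      rw [real_inner_comm] at this
      rw [this, mul_zero]
    · intro hv
      have h1 : v - x ∈ ((ℝ ∙ n)ᗮ : Submodule ℝ CEuc) :=
        Submodule.mem_orthogonal_singleton_iff_inner_right.2 hv
      rw [hspan, Submodule.orthogonal_orthogonal] at h1
      obtain ⟨r, hr⟩ := Submodule.mem_span_singleton.1 h1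
      rw [show v = (v - x) +ᵥ x by simp, vadd_left_mem_affineSpan_pair]
      exact ⟨r, by rw [vsub_eq_sub]; exact hr⟩
  set fy := (⟪n, y - x⟫ : ℝ) with hfy
  set fw := (⟪n, w - x⟫ : ℝ) with hfw
  by_cases hy0 : fy = 0
  · exact AffineSubspace.wOppSide_of_left_mem w ((hmem y).2 hy0)
  by_cases hw0 : fw = 0
  · exact AffineSubspace.wOppSide_of_right_mem y ((hmem w).2 hw0)
  rcases lt_trichotomy (fy * fw) 0 with hlt | heq | hgt
  · -- opposite strict signs : construct crossing point
    set t := fy / (fy - fw) with htdef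
    have hden : fy - fw ≠ 0 := by
      intro h0
      have hfe : fy = fw := by linarith
      rw [hfe] at hlt
      nlinarith [mul_self_nonneg fw]
    have ht0 : 0 ≤ t := by
      rcases mul_neg_iff.1 hlt with ⟨hfyp, hfwn⟩ | ⟨hfyn, hfwp⟩
      · exact div_nonneg hfyp.le (by linarith)
      · rw [htdef, div_nonneg_iff]
        right
        constructor <;> linarith
    have ht1 : t ≤ 1 := by
      rcases mul_neg_iff.1 hlt with ⟨hfyp, hfwn⟩ | ⟨hfyn, hfwp⟩
      · rw [htdef, div_le_one (by linarith)]
        linarith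
      · rw [htdef, div_le_one_iff]
        right; right
        constructor <;> linarith
    set p := y + t • (w - y) with hpdef
    have hps : p ∈ affineSpan ℝ ({x, z} : Set CEuc) := by
      rw [hmem]
      have : p - x = (y - x) + t • ((w - x) - (y - x)) := by rw [hpdef]; module
      rw [this, inner_add_right, real_inner_smul_right, inner_sub_right n (w - x) (y - x),
        ← hfy, ← hfw, htdef]
      field_simp
      ring
    have hseg : p ∈ segment ℝ y w :=
      ⟨1 - t, t, by linarith, ht0, by ring, by rw [hpdef]; module⟩
    exact AffineSubspace.wOppSide_iff_exists_wbtw.2 ⟨p, hps, mem_segment_iff_wbtw.1 hseg⟩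
  · exfalso
    rcases mul_eq_zero.1 heq with h0 | h0
    exacts [hy0 h0, hw0 h0]
  · -- same strict signs: SSameSide, contradiction
    exfalso
    apply h
    have hN : (⟪n, n⟫ : ℝ) ≠ 0 := inner_self_ne_zero.2 hn0
    have hNpos : (0:ℝ) < ⟪n, n⟫ := by
      rw [real_inner_self_eq_norm_sq]
      exact pow_pos (norm_pos_iff.2 hn0) 2
    set N := (⟪n, n⟫ : ℝ) with hNdef
    set p₁ := y - (fy / N) • n with hp₁
    set p₂ := w - (fw / N) • n with hp₂
    have hp₁s : p₁ ∈ affineSpan ℝ ({x, z} : Set CEuc) := by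
      rw [hmem]
      have : p₁ - x = (y - x) - (fy / N) • n := by rw [hp₁]; module
      rw [this, inner_sub_right, real_inner_smul_right, ← hfy, ← hNdef]
      field_simp
      ring
    have hp₂s : p₂ ∈ affineSpan ℝ ({x, z} : Set CEuc) := by
      rw [hmem]
      have : p₂ - x = (w - x) - (fw / N) • n := by rw [hp₂]; module
      rw [this, inner_sub_right, real_inner_smul_right, ← hfw, ← hNdef]
      field_simp
      ring
    have hv1 : y -ᵥ p₁ = (fy / N) • n := by rw [vsub_eq_sub, hp₁]; module
    have hv2 : w -ᵥ p₂ = (fw / N) • n := by rw [vsub_eq_sub, hp₂]; module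
    have hray : SameRay ℝ (y -ᵥ p₁) (w -ᵥ p₂) := by
      rw [hv1, hv2]
      rcases mul_pos_iff.1 hgt with ⟨hfyp, hfwp⟩ | ⟨hfyn, hfwn⟩
      · exact Or.inr (Or.inr ⟨fw / N, fy / N, div_pos hfwp hNpos, div_pos hfyp hNpos,
          by rw [smul_smul, smul_smul]; ring_nf⟩)
      · refine Or.inr (Or.inr ⟨-(fw / N), -(fy / N), ?_, ?_, ?_⟩)
        · have : fw / N < 0 := div_neg_of_neg_of_pos hfwn hNpos
          linarith
        · have : fy / N < 0 := div_neg_of_neg_of_pos hfyn hNpos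
          linarith
        · rw [neg_smul, neg_smul, smul_smul, smul_smul]
          ring_nf
    refine ⟨⟨p₁, hp₁s, p₂, hp₂s, hray⟩, ?_, ?_⟩
    · intro hmemy
      exact hy0 ((hmem y).1 hmemy)
    · intro hmemw
      exact hw0 ((hmem w).1 hmemw)

theorem stmt_12 (x y z w x' y' z' w' : EuclideanSpace ℝ (Fin 2))
    (h1 : ‖x - y‖ = ‖x' - y'‖) (h2 : ‖y - z‖ = ‖y' - z'‖)
    (h3 : ‖z - w‖ = ‖z' - w'‖) (h4 : ‖w - x‖ = ‖w' - x'‖)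
    (h5 : ‖x' - z'‖ ≤ ‖x - z‖)
    (hint : (segment ℝ x' z' ∩ segment ℝ y' w').Nonempty)
    (hxz : x ≠ z)
    (hside : ¬ (affineSpan ℝ ({x, z} : Set (EuclideanSpace ℝ (Fin 2)))).SSameSide y w) :
    (segment ℝ x z ∩ segment ℝ y w).Nonempty := by
  have hopp := oppside hxz y w hside
  obtain ⟨p, hps, hbtw⟩ := AffineSubspace.wOppSide_iff_exists_wbtw.1 hopp
  have hpseg : p ∈ segment ℝ y w := mem_segment_iff_wbtw.2 hbtw
  obtain ⟨t, ht⟩ : ∃ t : ℝ, t • (z - x) = p - x := by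
    rw [show p = (p - x) +ᵥ x by simp, vadd_left_mem_affineSpan_pair] at hps
    obtain ⟨r, hr⟩ := hps
    exact ⟨r, by rwa [vsub_eq_sub] at hr⟩
  rcases le_or_gt t 0 with ht0 | htpos
  · -- p on the far side of x : x ∈ [z, p]
    have hxseg : x ∈ segment ℝ z p := by
      have hne : (1:ℝ) - t ≠ 0 := by intro h0; linarith
      refine ⟨1 - 1/(1-t), 1/(1-t), ?_, div_nonneg zero_le_one (by linarith), by ring, ?_⟩
      · have hle : 1/(1-t) ≤ 1 := by
          rw [div_le_one (by linarith)]; linarith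
        linarith
      · linear_combination (norm := match_scalars <;> (field_simp; try ring)) (-(1/(1-t)) : ℝ) • ht
    have h1' : ‖z - y‖ = ‖z' - y'‖ := by rw [norm_sub_rev z, norm_sub_rev z']; exact h2
    have h2' : ‖y - x‖ = ‖y' - x'‖ := by rw [norm_sub_rev y, norm_sub_rev y']; exact h1
    have h3' : ‖x - w‖ = ‖x' - w'‖ := by rw [norm_sub_rev x, norm_sub_rev x']; exact h4
    have h4' : ‖w - z‖ = ‖w' - z'‖ := by rw [norm_sub_rev w, norm_sub_rev w']; exact h3
    have h5' : ‖z' - x'‖ ≤ ‖z - x‖ := by rw [norm_sub_rev z, norm_sub_rev z']; exact h5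
    have hint' : (segment ℝ z' x' ∩ segment ℝ y' w').Nonempty := by
      rwa [segment_symm] at hint
    obtain ⟨pt, hpt1, hpt2⟩ :=
      aux z y x w z' y' x' w' p h1' h2' h3' h4' h5' hint' (Ne.symm hxz) hpseg hxseg
    exact ⟨pt, by rwa [segment_symm] at hpt1, hpt2⟩
  · rcases le_or_gt t 1 with ht1 | ht1
    · -- p itself lies in [x, z]
      exact ⟨p, ⟨1 - t, t, by linarith, htpos.le, by ring,
        by linear_combination (norm := module) ht⟩, hpseg⟩
    · -- p beyond z : z ∈ [x, p]
      have hzseg : z ∈ segment ℝ x p := by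
        have hne : t ≠ 0 := by intro h0; linarith
        refine ⟨1 - 1/t, 1/t, ?_, div_nonneg zero_le_one (by linarith), by ring, ?_⟩
        · have hle : 1/t ≤ 1 := by
            rw [div_le_one (by linarith)]; linarith
          linarith
        · linear_combination (norm := match_scalars <;> (field_simp; try ring)) (-(1/t) : ℝ) • ht
      exact aux x y z w x' y' z' w' p h1 h2 h3 h4 h5 hint hxz hpseg hzseg
end

section
/- Every Cycl₄(0) metric space satisfies the 0-quadruple condition: if X is Cycl₄(0), then for all x,y,z,w ∈ X and all x',y',z',w' ∈ ℝ² with [x',z'] ∩ [y',w'] ≠ ∅, d(x,y) = ‖x'-y'‖, d(y,z) = ‖y'-z'‖, d(z,w) = ‖z'-w'‖, d(w,x) = ‖w'-x'‖, and d(x,z) = ‖x'-z'‖, one has d(y,w) ≤ ‖y'-w'‖. -/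
/-- A metric space is `Cycl₄(0)` if every 4-cycle admits a comparison configuration
in the Euclidean plane: sides do not increase and the two diagonals do not decrease. -/
def Cycl4Zero (X : Type*) [MetricSpace X] : Prop :=
  ∀ f : ZMod 4 → X, ∃ g : ZMod 4 → EuclideanSpace ℝ (Fin 2),
    (∀ i : ZMod 4, ‖g i - g (i + 1)‖ ≤ dist (f i) (f (i + 1))) ∧
    (∀ i j : ZMod 4, j ≠ i + 1 → i ≠ j + 1 → dist (f i) (f j) ≤ ‖g i - g j‖)

/-- Stewart-type identity in a real inner product space. -/
lemma stewart_aux {E : Type*} [NormedAddCommGroup E] [InnerProductSpace ℝ E]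
    (a b c : E) (s : ℝ) :
    ‖c - ((1 - s) • a + s • b)‖ ^ 2
      = (1 - s) * ‖c - a‖ ^ 2 + s * ‖c - b‖ ^ 2 - s * (1 - s) * ‖a - b‖ ^ 2 := by
  have h : c - ((1 - s) • a + s • b) = (1 - s) • (c - a) + s • (c - b) := by module
  have hab : ‖a - b‖ ^ 2 = ‖c - a‖ ^ 2 - 2 * (inner ℝ (c - a) (c - b) : ℝ) + ‖c - b‖ ^ 2 := by
    rw [show a - b = (c - b) - (c - a) by abel, @norm_sub_sq_real,
      real_inner_comm (c - b) (c - a)]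
    ring
  have hmain : ‖(1 - s) • (c - a) + s • (c - b)‖ ^ 2
      = (1 - s) ^ 2 * ‖c - a‖ ^ 2 + 2 * ((1 - s) * (s * (inner ℝ (c - a) (c - b) : ℝ)))
        + s ^ 2 * ‖c - b‖ ^ 2 := by
    rw [@norm_add_sq_real, real_inner_smul_left, real_inner_smul_right, norm_smul, norm_smul,
      Real.norm_eq_abs, Real.norm_eq_abs, mul_pow, mul_pow, sq_abs, sq_abs]
  rw [h, hmain, hab]
  ring

lemma sq_le_norm {E : Type*} [NormedAddCommGroup E] (u v : E)
    (h : ‖u‖ ^ 2 ≤ ‖v‖ ^ 2) : ‖u‖ ≤ ‖v‖ := by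
  nlinarith [norm_nonneg u, norm_nonneg v]

set_option maxHeartbeats 1000000 in
theorem stmt_13 {X : Type*} [MetricSpace X] (hX : Cycl4Zero X)
    (x y z w : X) (x' y' z' w' : EuclideanSpace ℝ (Fin 2))
    (hint : (segment ℝ x' z' ∩ segment ℝ y' w').Nonempty)
    (h1 : dist x y = ‖x' - y'‖) (h2 : dist y z = ‖y' - z'‖)
    (h3 : dist z w = ‖z' - w'‖) (h4 : dist w x = ‖w' - x'‖)
    (h5 : dist x z = ‖x' - z'‖) :
    dist y w ≤ ‖y' - w'‖ := by
  classical
  set f : ZMod 4 → X := fun i => if i = 0 then x else if i = 1 then y else if i = 2 then z else w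
    with hf
  obtain ⟨g, hside, hdiag⟩ := hX f
  have f0 : f 0 = x := by simp [hf]
  have f1 : f 1 = y := by rw [hf]; simp [show (1 : ZMod 4) ≠ 0 by decide]
  have f2 : f 2 = z := by
    rw [hf]; simp [show (2 : ZMod 4) ≠ 0 by decide, show (2 : ZMod 4) ≠ 1 by decide]
  have f3 : f 3 = w := by
    rw [hf]
    simp [show (3 : ZMod 4) ≠ 0 by decide, show (3 : ZMod 4) ≠ 1 by decide,
      show (3 : ZMod 4) ≠ 2 by decide]
  have e01 : ‖g 0 - g 1‖ ≤ ‖x' - y'‖ := by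
    have := hside 0; rw [show (0 : ZMod 4) + 1 = 1 by decide, f0, f1, h1] at this; exact this
  have e12 : ‖g 1 - g 2‖ ≤ ‖y' - z'‖ := by
    have := hside 1; rw [show (1 : ZMod 4) + 1 = 2 by decide, f1, f2, h2] at this; exact this
  have e23 : ‖g 2 - g 3‖ ≤ ‖z' - w'‖ := by
    have := hside 2; rw [show (2 : ZMod 4) + 1 = 3 by decide, f2, f3, h3] at this; exact this
  have e30 : ‖g 3 - g 0‖ ≤ ‖w' - x'‖ := by
    have := hside 3; rw [show (3 : ZMod 4) + 1 = 0 by decide, f3, f0, h4] at this; exact this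
  have e02 : ‖x' - z'‖ ≤ ‖g 0 - g 2‖ := by
    have := hdiag 0 2 (by decide) (by decide); rw [f0, f2, h5] at this; exact this
  have e13 : dist y w ≤ ‖g 1 - g 3‖ := by
    have := hdiag 1 3 (by decide) (by decide); rw [f1, f3] at this; exact this
  obtain ⟨p, hpxz, hpyw⟩ := hint
  obtain ⟨s1, s2, hs1, hs2, hsum, hp⟩ := hpxz
  have hs1' : s1 = 1 - s2 := by linarith
  have hp' : p = (1 - s2) • x' + s2 • z' := by rw [← hp, hs1']
  have hs2' : s2 ≤ 1 := by linarith
  set q : EuclideanSpace ℝ (Fin 2) := (1 - s2) • g 0 + s2 • g 2 with hq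
  -- squared comparisons for sides and diagonal
  have sq01 : ‖g 0 - g 1‖ ^ 2 ≤ ‖x' - y'‖ ^ 2 := pow_le_pow_left₀ (norm_nonneg _) e01 2
  have sq12 : ‖g 1 - g 2‖ ^ 2 ≤ ‖y' - z'‖ ^ 2 := pow_le_pow_left₀ (norm_nonneg _) e12 2
  have sq23 : ‖g 2 - g 3‖ ^ 2 ≤ ‖z' - w'‖ ^ 2 := pow_le_pow_left₀ (norm_nonneg _) e23 2
  have sq30 : ‖g 3 - g 0‖ ^ 2 ≤ ‖w' - x'‖ ^ 2 := pow_le_pow_left₀ (norm_nonneg _) e30 2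
  have sq02 : ‖x' - z'‖ ^ 2 ≤ ‖g 0 - g 2‖ ^ 2 := pow_le_pow_left₀ (norm_nonneg _) e02 2
  have S1 := stewart_aux (g 0) (g 2) (g 1) s2
  have S2 := stewart_aux x' z' y' s2
  have S3 := stewart_aux (g 0) (g 2) (g 3) s2
  have S4 := stewart_aux x' z' w' s2
  rw [← hq] at S1 S3
  rw [← hp'] at S2 S4
  have key1 : ‖g 1 - q‖ ≤ ‖y' - p‖ := by
    apply sq_le_norm
    have r1 : ‖g 1 - g 0‖ = ‖g 0 - g 1‖ := norm_sub_rev _ _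
    have r2 : ‖y' - x'‖ = ‖x' - y'‖ := norm_sub_rev _ _
    rw [S1, S2, r1, r2]
    nlinarith [mul_nonneg (sub_nonneg.2 hs2') (sub_nonneg.2 sq01),
      mul_nonneg hs2 (sub_nonneg.2 sq12),
      mul_nonneg (mul_nonneg hs2 (sub_nonneg.2 hs2')) (sub_nonneg.2 sq02)]
  have key2 : ‖g 3 - q‖ ≤ ‖w' - p‖ := by
    apply sq_le_norm
    have r1 : ‖g 3 - g 2‖ = ‖g 2 - g 3‖ := norm_sub_rev _ _
    have r2 : ‖w' - z'‖ = ‖z' - w'‖ := norm_sub_rev _ _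
    rw [S3, S4, r1, r2]
    nlinarith [mul_nonneg (sub_nonneg.2 hs2') (sub_nonneg.2 sq30),
      mul_nonneg hs2 (sub_nonneg.2 sq23),
      mul_nonneg (mul_nonneg hs2 (sub_nonneg.2 hs2')) (sub_nonneg.2 sq02)]
  have hseg : dist y' p + dist p w' = dist y' w' := dist_add_dist_of_mem_segment hpyw
  have tri : ‖g 1 - g 3‖ ≤ ‖g 1 - q‖ + ‖q - g 3‖ := norm_sub_le_norm_sub_add_norm_sub _ _ _
  have hqw : ‖q - g 3‖ = ‖g 3 - q‖ := norm_sub_rev _ _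
  have hpw : ‖p - w'‖ = ‖w' - p‖ := norm_sub_rev _ _
  calc dist y w ≤ ‖g 1 - g 3‖ := e13
    _ ≤ ‖g 1 - q‖ + ‖q - g 3‖ := tri
    _ ≤ ‖y' - p‖ + ‖w' - p‖ := by rw [hqw]; exact add_le_add key1 key2
    _ = dist y' p + dist p w' := by rw [dist_eq_norm, dist_eq_norm, hpw]
    _ = ‖y' - w'‖ := by rw [hseg, dist_eq_norm]
end

section
/- A metric space satisfies the ⊠-inequalities if and only if it is Cycl₄(0). -/
set_option linter.unusedVariables false
set_option linter.deprecated false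


noncomputable def pt2 (u v : ℝ) : EuclideanSpace ℝ (Fin 2) := WithLp.toLp 2 ![u, v]

lemma pt2_sub (u1 v1 u2 v2 : ℝ) : pt2 u1 v1 - pt2 u2 v2 = pt2 (u1-u2) (v1-v2) := by
  ext i; fin_cases i <;> simp [pt2]

lemma norm_pt2_sq (u v : ℝ) : ‖pt2 u v‖^2 = u^2 + v^2 := by
  rw [EuclideanSpace.norm_eq, Real.sq_sqrt (by positivity)]
  simp [pt2, Fin.sum_univ_two, sq_abs]

lemma norm_le_of_sq {n r : ℝ} (hn : 0 ≤ n) (hr : 0 ≤ r) (h : n^2 ≤ r^2) : n ≤ r := by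
  nlinarith

lemma quad_of_line (a b c e p q xx yy zz ww : ℝ)
    (ha0 : 0 ≤ a) (hb0 : 0 ≤ b) (hc0 : 0 ≤ c) (he0 : 0 ≤ e) (hp0 : 0 ≤ p) (hq0 : 0 ≤ q)
    (h1 : (xx-yy)^2 ≤ a^2) (h2 : (yy-zz)^2 ≤ b^2) (h3 : (zz-ww)^2 ≤ c^2)
    (h4 : (ww-xx)^2 ≤ e^2) (h5 : p^2 ≤ (xx-zz)^2) (h6 : q^2 ≤ (yy-ww)^2) :
    ∃ x' y' z' w' : EuclideanSpace ℝ (Fin 2),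
      ‖x' - y'‖ ≤ a ∧ ‖y' - z'‖ ≤ b ∧ ‖z' - w'‖ ≤ c ∧
      ‖w' - x'‖ ≤ e ∧ p ≤ ‖x' - z'‖ ∧ q ≤ ‖y' - w'‖ := by
  refine ⟨pt2 xx 0, pt2 yy 0, pt2 zz 0, pt2 ww 0, ?_, ?_, ?_, ?_, ?_, ?_⟩
  · apply norm_le_of_sq (norm_nonneg _) ha0; rw [pt2_sub, norm_pt2_sq]; linarith
  · apply norm_le_of_sq (norm_nonneg _) hb0; rw [pt2_sub, norm_pt2_sq]; linarith
  · apply norm_le_of_sq (norm_nonneg _) hc0; rw [pt2_sub, norm_pt2_sq]; linarith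
  · apply norm_le_of_sq (norm_nonneg _) he0; rw [pt2_sub, norm_pt2_sq]; linarith
  · apply norm_le_of_sq hp0 (norm_nonneg _); rw [pt2_sub, norm_pt2_sq]; linarith
  · apply norm_le_of_sq hq0 (norm_nonneg _); rw [pt2_sub, norm_pt2_sq]; linarith

lemma quad_of_cross (a b c e p q T S k h : ℝ)
    (ha0 : 0 ≤ a) (hb0 : 0 ≤ b) (hc0 : 0 ≤ c) (he0 : 0 ≤ e) (hp0 : 0 ≤ p) (hq0 : 0 ≤ q)
    (hh2 : h^2 = q^2 - k^2) (hk : p*k = (b^2+e^2-a^2-c^2)/2)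
    (hc00 : p^2*(0-T)^2 + q^2*(0-S)^2 + (a^2-b^2+c^2-e^2)*((0-T)*(0-S)) ≤ a^2)
    (hc10 : p^2*(1-T)^2 + q^2*(0-S)^2 + (a^2-b^2+c^2-e^2)*((1-T)*(0-S)) ≤ b^2)
    (hc11 : p^2*(1-T)^2 + q^2*(1-S)^2 + (a^2-b^2+c^2-e^2)*((1-T)*(1-S)) ≤ c^2)
    (hc01 : p^2*(0-T)^2 + q^2*(1-S)^2 + (a^2-b^2+c^2-e^2)*((0-T)*(1-S)) ≤ e^2) :
    ∃ x' y' z' w' : EuclideanSpace ℝ (Fin 2),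
      ‖x' - y'‖ ≤ a ∧ ‖y' - z'‖ ≤ b ∧ ‖z' - w'‖ ≤ c ∧
      ‖w' - x'‖ ≤ e ∧ p ≤ ‖x' - z'‖ ∧ q ≤ ‖y' - w'‖ := by
  refine ⟨pt2 (-(T*p)) 0, pt2 (-(S*k)) (-(S*h)), pt2 ((1-T)*p) 0,
    pt2 ((1-S)*k) ((1-S)*h), ?_, ?_, ?_, ?_, ?_, ?_⟩
  · apply norm_le_of_sq (norm_nonneg _) ha0
    rw [pt2_sub, norm_pt2_sq]
    have hsq : (-(T*p) - -(S*k))^2 + ((0:ℝ) - -(S*h))^2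
        = p^2*(0-T)^2 + q^2*(0-S)^2 + (a^2-b^2+c^2-e^2)*((0-T)*(0-S)) := by
      linear_combination S^2*hh2 - 2*T*S*hk
    linarith
  · apply norm_le_of_sq (norm_nonneg _) hb0
    rw [pt2_sub, norm_pt2_sq]
    have hsq : (-(S*k) - (1-T)*p)^2 + (-(S*h) - (0:ℝ))^2
        = p^2*(1-T)^2 + q^2*(0-S)^2 + (a^2-b^2+c^2-e^2)*((1-T)*(0-S)) := by
      linear_combination S^2*hh2 + 2*(1-T)*S*hk
    linarith
  · apply norm_le_of_sq (norm_nonneg _) hc0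
    rw [pt2_sub, norm_pt2_sq]
    have hsq : ((1-T)*p - (1-S)*k)^2 + ((0:ℝ) - (1-S)*h)^2
        = p^2*(1-T)^2 + q^2*(1-S)^2 + (a^2-b^2+c^2-e^2)*((1-T)*(1-S)) := by
      linear_combination (1-S)^2*hh2 - 2*(1-T)*(1-S)*hk
    linarith
  · apply norm_le_of_sq (norm_nonneg _) he0
    rw [pt2_sub, norm_pt2_sq]
    have hsq : ((1-S)*k - -(T*p))^2 + ((1-S)*h - (0:ℝ))^2
        = p^2*(0-T)^2 + q^2*(1-S)^2 + (a^2-b^2+c^2-e^2)*((0-T)*(1-S)) := by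
      linear_combination (1-S)^2*hh2 + 2*T*(1-S)*hk
    linarith
  · apply norm_le_of_sq hp0 (norm_nonneg _)
    rw [pt2_sub, norm_pt2_sq]
    have hsq : (-(T*p) - (1-T)*p)^2 + ((0:ℝ) - 0)^2 = p^2 := by ring
    linarith
  · apply norm_le_of_sq hq0 (norm_nonneg _)
    rw [pt2_sub, norm_pt2_sq]
    have hsq : (-(S*k) - (1-S)*k)^2 + (-(S*h) - (1-S)*h)^2 = q^2 := by
      linear_combination hh2
    linarith

lemma norm_sq_two (v : EuclideanSpace ℝ (Fin 2)) : ‖v‖^2 = (v 0)^2 + (v 1)^2 := by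
  rw [EuclideanSpace.norm_eq, Real.sq_sqrt (by positivity)]
  simp [Fin.sum_univ_two, sq_abs]


def Gfun (a b c e p q t s : ℝ) : ℝ :=
  (1 - t) * (1 - s) * a ^ 2 + t * (1 - s) * b ^ 2
    + t * s * c ^ 2 + (1 - t) * s * e ^ 2
    - t * (1 - t) * p ^ 2 - s * (1 - s) * q ^ 2

lemma aux_B_nonneg {B C : ℝ} (h : ∀ r : ℝ, 0 ≤ r → r ≤ 1 → 0 ≤ B * r + C * r ^ 2) :
    0 ≤ B := by
  by_contra hB
  push_neg at hB
  set M := max C 1 with hM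
  have hM1 : (1:ℝ) ≤ M := le_max_right _ _
  have hM0 : (0:ℝ) < M := lt_of_lt_of_le one_pos hM1
  have hCM : C ≤ M := le_max_left _ _
  set r := min 1 (-B / (2 * M)) with hr
  have hr0 : 0 < r := lt_min one_pos (div_pos (by linarith) (by positivity))
  have hr1 : r ≤ 1 := min_le_left _ _
  have hrB : r ≤ -B / (2 * M) := min_le_right _ _
  have h2' : r * (2 * M) ≤ -B := (le_div_iff₀ (by positivity)).mp hrB
  have hCr : C * r ≤ M * r := mul_le_mul_of_nonneg_right hCM hr0.le
  have key : B + C * r < 0 := by linarith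
  have hneg : (B + C * r) * r < 0 := mul_neg_of_neg_of_pos key hr0
  have := h r hr0.le hr1
  nlinarith

lemma corner_bound (a b c e p q T S c₁ c₂ : ℝ)
    (hmin : ∀ t' s' : ℝ, 0 ≤ t' → t' ≤ 1 → 0 ≤ s' → s' ≤ 1 →
      Gfun a b c e p q T S ≤ Gfun a b c e p q t' s')
    (hT0 : 0 ≤ T) (hT1 : T ≤ 1) (hS0 : 0 ≤ S) (hS1 : S ≤ 1)
    (hc10 : 0 ≤ c₁) (hc11 : c₁ ≤ 1) (hc20 : 0 ≤ c₂) (hc21 : c₂ ≤ 1)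
    (hGTS : 0 ≤ Gfun a b c e p q T S) :
    p^2*(c₁-T)^2 + q^2*(c₂-S)^2 + (a^2-b^2+c^2-e^2)*((c₁-T)*(c₂-S))
      ≤ Gfun a b c e p q c₁ c₂ := by
  set B := (c₁-T)*(-(1-S)*a^2 + (1-S)*b^2 + S*c^2 - S*e^2 - (1-2*T)*p^2)
        + (c₂-S)*(-(1-T)*a^2 - T*b^2 + T*c^2 + (1-T)*e^2 - (1-2*S)*q^2) with hB
  set C := p^2*(c₁-T)^2 + q^2*(c₂-S)^2 + (a^2-b^2+c^2-e^2)*((c₁-T)*(c₂-S)) with hC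
  have hexp : ∀ r : ℝ, Gfun a b c e p q ((1-r)*T + r*c₁) ((1-r)*S + r*c₂)
      = Gfun a b c e p q T S + B*r + C*r^2 := by
    intro r; simp only [Gfun, hB, hC]; ring
  have hmem : ∀ r : ℝ, 0 ≤ r → r ≤ 1 → (0 ≤ (1-r)*T + r*c₁ ∧ (1-r)*T + r*c₁ ≤ 1)
      ∧ (0 ≤ (1-r)*S + r*c₂ ∧ (1-r)*S + r*c₂ ≤ 1) := by
    intro r h0 h1
    refine ⟨⟨?_, ?_⟩, ⟨?_, ?_⟩⟩ <;> nlinarith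
  have hB0 : 0 ≤ B := by
    apply aux_B_nonneg (C := C)
    intro r h0 h1
    obtain ⟨⟨m1, m2⟩, m3, m4⟩ := hmem r h0 h1
    have := hmin _ _ m1 m2 m3 m4
    rw [hexp r] at this
    linarith
  have h1 := hmin c₁ c₂ hc10 hc11 hc20 hc21
  have hco := hexp 1
  norm_num at hco
  rw [hco]
  linarith

lemma sum_diag_le (A C p q : ℝ) (hA : 0 ≤ A) (hC : 0 ≤ C)
    (h : ∀ t : ℝ, 0 ≤ t → t ≤ 1 → 0 ≤ (1-t)*A^2 + t*C^2 - t*(1-t)*(p+q)^2) :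
    p + q ≤ A + C := by
  by_contra hlt
  push_neg at hlt
  set d := p + q with hd
  have hd0 : 0 < d := lt_of_le_of_lt (by linarith) hlt
  have hP : 0 < A - C + d := by linarith
  have hQ : 0 < C - A + d := by linarith
  have ht0 : 0 ≤ (A - C + d)/(2*d) := by positivity
  have ht1 : (A - C + d)/(2*d) ≤ 1 := by
    rw [div_le_one (by positivity)]; linarith
  have hi := h _ ht0 ht1
  have hkey : (1 - (A-C+d)/(2*d))*A^2 + ((A-C+d)/(2*d))*C^2
      - ((A-C+d)/(2*d))*(1-(A-C+d)/(2*d))*(p+q)^2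
      = (2*d*(C-A+d)*A^2 + 2*d*(A-C+d)*C^2 - (A-C+d)*(C-A+d)*d^2)/(4*d^2) := by
    rw [← hd]; field_simp; ring
  rw [hkey, le_div_iff₀ (by positivity)] at hi
  have hbr : 2*(A-C)^2 < d*(d+A+C) := by
    nlinarith [mul_pos hd0 hd0, mul_nonneg hA hC,
      mul_nonneg (add_nonneg hA hC) (by linarith : (0:ℝ) ≤ d - A - C)]
  have hprod : 0 < d*(d-A-C)*(d*(d+A+C) - 2*(A-C)^2) :=
    mul_pos (mul_pos hd0 (by linarith)) (by linarith)
  have hid : (A-C+d)*(C-A+d)*d^2 - 2*d*(C-A+d)*A^2 - 2*d*(A-C+d)*C^2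
      = d*(d-A-C)*(d*(d+A+C) - 2*(A-C)^2) := by ring
  nlinarith [hi, hprod, hid]

lemma sq_le_sq_of_between {u r : ℝ} (h1 : -r ≤ u) (h2 : u ≤ r) : u^2 ≤ r^2 := by nlinarith

set_option maxHeartbeats 1000000 in
lemma master (a b c e p q : ℝ)
    (ha0 : 0 ≤ a) (hb0 : 0 ≤ b) (hc0 : 0 ≤ c) (he0 : 0 ≤ e) (hp0 : 0 ≤ p) (hq0 : 0 ≤ q)
    (t_p_ab : p ≤ a + b) (t_p_ec : p ≤ e + c) (t_q_bc : q ≤ b + c) (t_q_ae : q ≤ a + e)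
    (t_b_ap : b ≤ a + p) (t_c_bq : c ≤ b + q) (t_e_aq : e ≤ a + q) (t_a_pb : a ≤ p + b)
    (t_c_pe : c ≤ p + e) (t_e_pc : e ≤ p + c) (t_a_eq : a ≤ e + q) (t_b_qc : b ≤ q + c)
    (hbox : ∀ t s : ℝ, 0 ≤ t → t ≤ 1 → 0 ≤ s → s ≤ 1 → 0 ≤ Gfun a b c e p q t s) :
    ∃ x' y' z' w' : EuclideanSpace ℝ (Fin 2),
      ‖x' - y'‖ ≤ a ∧ ‖y' - z'‖ ≤ b ∧ ‖z' - w'‖ ≤ c ∧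
      ‖w' - x'‖ ≤ e ∧ p ≤ ‖x' - z'‖ ∧ q ≤ ‖y' - w'‖ := by
  by_cases hpz : p = 0
  · -- degenerate: a = b, c = e (up to ≤), collinear points x=z=0, y=A, w=A-q
    have hba : b ≤ a := by linarith
    have hab : a ≤ b := by linarith
    have hce : c ≤ e := by linarith
    have hec : e ≤ c := by linarith
    set A := max 0 (q - c) with hAdef
    have hA0 : (0:ℝ) ≤ A := le_max_left _ _
    have hAq : q - c ≤ A := le_max_right _ _
    have hAa : A ≤ a := max_le ha0 (by linarith)
    have hAqc : A ≤ q + c := max_le (by linarith) (by linarith)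
    apply quad_of_line a b c e p q 0 A 0 (A - q) ha0 hb0 hc0 he0 hp0 hq0
    · exact sq_le_sq_of_between (by linarith) (by linarith)
    · exact sq_le_sq_of_between (by linarith) (by linarith)
    · exact sq_le_sq_of_between (by linarith) (by linarith)
    · exact sq_le_sq_of_between (by linarith) (by linarith)
    · exact le_of_eq (by rw [hpz]; ring)
    · exact le_of_eq (by ring)
  by_cases hqz : q = 0
  · have hea : e ≤ a := by linarith
    have hae : a ≤ e := by linarith
    have hcb : c ≤ b := by linarith
    have hbc : b ≤ c := by linarith
    set A := max 0 (p - b) with hAdef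
    have hA0 : (0:ℝ) ≤ A := le_max_left _ _
    have hAp : p - b ≤ A := le_max_right _ _
    have hAa : A ≤ a := max_le ha0 (by linarith)
    have hApb : A ≤ p + b := max_le (by linarith) (by linarith)
    apply quad_of_line a b c e p q A 0 (A - p) 0 ha0 hb0 hc0 he0 hp0 hq0
    · exact sq_le_sq_of_between (by linarith) (by linarith)
    · exact sq_le_sq_of_between (by linarith) (by linarith)
    · exact sq_le_sq_of_between (by linarith) (by linarith)
    · exact sq_le_sq_of_between (by linarith) (by linarith)
    · exact le_of_eq (by ring)
    · exact le_of_eq (by rw [hqz]; ring)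
  have hp' : 0 < p := hp0.lt_of_ne (Ne.symm hpz)
  have hq' : 0 < q := hq0.lt_of_ne (Ne.symm hqz)
  by_cases hcase2 : 2*p*q < a^2 - b^2 + c^2 - e^2
  · have hpq_ac : p + q ≤ a + c := by
      apply sum_diag_le a c p q ha0 hc0
      intro t ht0 ht1
      have hG := hbox t t ht0 ht1 ht0 ht1
      have hprod : 0 ≤ (t*(1-t)) * (a^2 + c^2 - 2*p*q - (b^2 + e^2)) :=
        mul_nonneg (mul_nonneg ht0 (by linarith)) (by linarith)
      unfold Gfun at hG
      linarith [hG, hprod]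
    set A := max (max (-a) (p - b)) (max (p + q - c) (q - e)) with hAdef
    have hge1 : -a ≤ A := le_trans (le_max_left _ _) (le_max_left _ _)
    have hge2 : p - b ≤ A := le_trans (le_max_right _ _) (le_max_left _ _)
    have hge3 : p + q - c ≤ A := le_trans (le_max_left _ _) (le_max_right _ _)
    have hge4 : q - e ≤ A := le_trans (le_max_right _ _) (le_max_right _ _)
    have hle1 : A ≤ a := max_le (max_le (by linarith) (by linarith))
      (max_le (by linarith) (by linarith))
    have hle2 : A ≤ p + b := max_le (max_le (by linarith) (by linarith))
      (max_le (by linarith) (by linarith))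
    have hle3 : A ≤ p + q + c := max_le (max_le (by linarith) (by linarith))
      (max_le (by linarith) (by linarith))
    have hle4 : A ≤ q + e := max_le (max_le (by linarith) (by linarith))
      (max_le (by linarith) (by linarith))
    apply quad_of_line a b c e p q 0 A p (A - q) ha0 hb0 hc0 he0 hp0 hq0
    · exact sq_le_sq_of_between (by linarith) (by linarith)
    · exact sq_le_sq_of_between (by linarith) (by linarith)
    · exact sq_le_sq_of_between (by linarith) (by linarith)
    · exact sq_le_sq_of_between (by linarith) (by linarith)
    · exact le_of_eq (by ring)
    · exact le_of_eq (by ring)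
  by_cases hcase3 : a^2 - b^2 + c^2 - e^2 < -(2*p*q)
  · have hpq_be : p + q ≤ e + b := by
      apply sum_diag_le e b p q he0 hb0
      intro t ht0 ht1
      have hG := hbox t (1-t) ht0 ht1 (by linarith) (by linarith)
      have hprod : 0 ≤ (t*(1-t)) * (b^2 + e^2 - 2*p*q - (a^2 + c^2)) :=
        mul_nonneg (mul_nonneg ht0 (by linarith)) (by linarith)
      unfold Gfun at hG
      linarith [hG, hprod]
    set A := max (max (-a) (p - b)) (max (p - q - c) (-q - e)) with hAdef
    have hge1 : -a ≤ A := le_trans (le_max_left _ _) (le_max_left _ _)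
    have hge2 : p - b ≤ A := le_trans (le_max_right _ _) (le_max_left _ _)
    have hge3 : p - q - c ≤ A := le_trans (le_max_left _ _) (le_max_right _ _)
    have hge4 : -q - e ≤ A := le_trans (le_max_right _ _) (le_max_right _ _)
    have hle1 : A ≤ a := max_le (max_le (by linarith) (by linarith))
      (max_le (by linarith) (by linarith))
    have hle2 : A ≤ p + b := max_le (max_le (by linarith) (by linarith))
      (max_le (by linarith) (by linarith))
    have hle3 : A ≤ p - q + c := max_le (max_le (by linarith) (by linarith))
      (max_le (by linarith) (by linarith))
    have hle4 : A ≤ -q + e := max_le (max_le (by linarith) (by linarith))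
      (max_le (by linarith) (by linarith))
    apply quad_of_line a b c e p q 0 A p (A + q) ha0 hb0 hc0 he0 hp0 hq0
    · exact sq_le_sq_of_between (by linarith) (by linarith)
    · exact sq_le_sq_of_between (by linarith) (by linarith)
    · exact sq_le_sq_of_between (by linarith) (by linarith)
    · exact sq_le_sq_of_between (by linarith) (by linarith)
    · exact le_of_eq (by ring)
    · exact le_of_eq (by ring)
  -- main crossing case
  push_neg at hcase2 hcase3
  have hcont : Continuous (fun v : ℝ × ℝ => Gfun a b c e p q v.1 v.2) := by
    unfold Gfun; fun_prop
  obtain ⟨v0, hv0, hmin⟩ := (isCompact_Icc.prod isCompact_Icc).exists_isMinOn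
    (⟨(0,0), by norm_num⟩ : (Set.Icc (0:ℝ) 1 ×ˢ Set.Icc (0:ℝ) 1).Nonempty)
    hcont.continuousOn
  obtain ⟨hT0, hT1⟩ : v0.1 ∈ Set.Icc (0:ℝ) 1 := hv0.1
  obtain ⟨hS0, hS1⟩ : v0.2 ∈ Set.Icc (0:ℝ) 1 := hv0.2
  set T := v0.1 with hTdef
  set S := v0.2 with hSdef
  have hminG : ∀ t' s' : ℝ, 0 ≤ t' → t' ≤ 1 → 0 ≤ s' → s' ≤ 1 →
      Gfun a b c e p q T S ≤ Gfun a b c e p q t' s' := by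
    intro t' s' h1 h2 h3 h4
    exact hmin (Set.mk_mem_prod (Set.mem_Icc.mpr ⟨h1, h2⟩) (Set.mem_Icc.mpr ⟨h3, h4⟩))
  have hGTS : 0 ≤ Gfun a b c e p q T S := hbox T S hT0 hT1 hS0 hS1
  have g00 : Gfun a b c e p q 0 0 = a^2 := by unfold Gfun; ring
  have g10 : Gfun a b c e p q 1 0 = b^2 := by unfold Gfun; ring
  have g11 : Gfun a b c e p q 1 1 = c^2 := by unfold Gfun; ring
  have g01 : Gfun a b c e p q 0 1 = e^2 := by unfold Gfun; ring
  have hc00 := corner_bound a b c e p q T S 0 0 hminG hT0 hT1 hS0 hS1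
    le_rfl zero_le_one le_rfl zero_le_one hGTS
  have hc10 := corner_bound a b c e p q T S 1 0 hminG hT0 hT1 hS0 hS1
    zero_le_one le_rfl le_rfl zero_le_one hGTS
  have hc11 := corner_bound a b c e p q T S 1 1 hminG hT0 hT1 hS0 hS1
    zero_le_one le_rfl zero_le_one le_rfl hGTS
  have hc01 := corner_bound a b c e p q T S 0 1 hminG hT0 hT1 hS0 hS1
    le_rfl zero_le_one zero_le_one le_rfl hGTS
  rw [g00] at hc00
  rw [g10] at hc10
  rw [g11] at hc11
  rw [g01] at hc01
  have hk : p * ((b^2+e^2-a^2-c^2)/(2*p)) = (b^2+e^2-a^2-c^2)/2 := by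
    field_simp
  have hk2 : ((b^2+e^2-a^2-c^2)/(2*p))^2 ≤ q^2 := by
    rw [div_pow, div_le_iff₀ (by positivity)]
    have hm : 0 ≤ (2*p*q - (a^2-b^2+c^2-e^2)) * (2*p*q + (a^2-b^2+c^2-e^2)) :=
      mul_nonneg (by linarith) (by linarith)
    nlinarith [hm]
  have hh2 : (Real.sqrt (q^2 - ((b^2+e^2-a^2-c^2)/(2*p))^2))^2
      = q^2 - ((b^2+e^2-a^2-c^2)/(2*p))^2 := Real.sq_sqrt (by linarith)
  exact quad_of_cross a b c e p q T S ((b^2+e^2-a^2-c^2)/(2*p))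
    (Real.sqrt (q^2 - ((b^2+e^2-a^2-c^2)/(2*p))^2))
    ha0 hb0 hc0 he0 hp0 hq0 hh2 hk hc00 hc10 hc11 hc01


/-- The ⊠-inequalities for a metric space. -/
def BoxtimesIneq (X : Type*) [MetricSpace X] : Prop :=
  ∀ t s : ℝ, t ∈ Set.Icc (0 : ℝ) 1 → s ∈ Set.Icc (0 : ℝ) 1 → ∀ x y z w : X,
    0 ≤ (1 - t) * (1 - s) * dist x y ^ 2 + t * (1 - s) * dist y z ^ 2
      + t * s * dist z w ^ 2 + (1 - t) * s * dist w x ^ 2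
      - t * (1 - t) * dist x z ^ 2 - s * (1 - s) * dist y w ^ 2

/-- A metric space is `Cycl₄(0)` (quadruple form): every quadruple admits a Euclidean
comparison quadruple with sides not larger and diagonals not smaller. -/
def Cycl4ZeroQuad (X : Type*) [MetricSpace X] : Prop :=
  ∀ x y z w : X, ∃ x' y' z' w' : EuclideanSpace ℝ (Fin 2),
    ‖x' - y'‖ ≤ dist x y ∧ ‖y' - z'‖ ≤ dist y z ∧ ‖z' - w'‖ ≤ dist z w ∧
    ‖w' - x'‖ ≤ dist w x ∧ dist x z ≤ ‖x' - z'‖ ∧ dist y w ≤ ‖y' - w'‖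

theorem stmt_14 {X : Type*} [MetricSpace X] :
    BoxtimesIneq X ↔ Cycl4ZeroQuad X := by
  constructor
  · -- forward direction
    intro hbox x y z w
    apply master (dist x y) (dist y z) (dist z w) (dist w x) (dist x z) (dist y w)
      dist_nonneg dist_nonneg dist_nonneg dist_nonneg dist_nonneg dist_nonneg
    · exact dist_triangle x y z
    · have h := dist_triangle x w z
      rw [dist_comm x w, dist_comm w z] at h; linarith
    · exact dist_triangle y z w
    · have h := dist_triangle y x w
      rw [dist_comm y x, dist_comm x w] at h; linarith
    · have h := dist_triangle y x z
      rw [dist_comm y x] at h; linarith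
    · have h := dist_triangle z y w
      rw [dist_comm z y] at h; linarith
    · have h := dist_triangle w y x
      rw [dist_comm w y, dist_comm y x] at h; linarith
    · have h := dist_triangle x z y
      rw [dist_comm z y] at h; linarith
    · have h := dist_triangle z x w
      rw [dist_comm z x, dist_comm x w] at h; linarith
    · have h := dist_triangle w z x
      rw [dist_comm w z, dist_comm z x] at h; linarith
    · have h := dist_triangle x w y
      rw [dist_comm x w, dist_comm w y] at h; linarith
    · have h := dist_triangle y w z
      rw [dist_comm w z] at h; linarith
    · intro t s h1 h2 h3 h4
      have h := hbox t s ⟨h1, h2⟩ ⟨h3, h4⟩ x y z w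
      unfold Gfun
      linarith
  · -- backward direction
    intro hc t s ht hs x y z w
    obtain ⟨ht0, ht1⟩ := ht
    obtain ⟨hs0, hs1⟩ := hs
    obtain ⟨x', y', z', w', h1, h2, h3, h4, h5, h6⟩ := hc x y z w
    have key : 0 ≤ (1 - t) * (1 - s) * ‖x' - y'‖ ^ 2 + t * (1 - s) * ‖y' - z'‖ ^ 2
        + t * s * ‖z' - w'‖ ^ 2 + (1 - t) * s * ‖w' - x'‖ ^ 2
        - t * (1 - t) * ‖x' - z'‖ ^ 2 - s * (1 - s) * ‖y' - w'‖ ^ 2 := by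
      simp only [norm_sq_two, PiLp.sub_apply]
      nlinarith [sq_nonneg ((1-t)*x' 0 + t*z' 0 - (1-s)*y' 0 - s*w' 0),
        sq_nonneg ((1-t)*x' 1 + t*z' 1 - (1-s)*y' 1 - s*w' 1)]
    have m1 : ‖x' - y'‖^2 ≤ dist x y^2 := pow_le_pow_left₀ (norm_nonneg _) h1 2
    have m2 : ‖y' - z'‖^2 ≤ dist y z^2 := pow_le_pow_left₀ (norm_nonneg _) h2 2
    have m3 : ‖z' - w'‖^2 ≤ dist z w^2 := pow_le_pow_left₀ (norm_nonneg _) h3 2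
    have m4 : ‖w' - x'‖^2 ≤ dist w x^2 := pow_le_pow_left₀ (norm_nonneg _) h4 2
    have m5 : dist x z^2 ≤ ‖x' - z'‖^2 := pow_le_pow_left₀ dist_nonneg h5 2
    have m6 : dist y w^2 ≤ ‖y' - w'‖^2 := pow_le_pow_left₀ dist_nonneg h6 2
    have c1 : (0:ℝ) ≤ (1-t)*(1-s) := mul_nonneg (by linarith) (by linarith)
    have c2 : (0:ℝ) ≤ t*(1-s) := mul_nonneg ht0 (by linarith)
    have c3 : (0:ℝ) ≤ t*s := mul_nonneg ht0 hs0
    have c4 : (0:ℝ) ≤ (1-t)*s := mul_nonneg (by linarith) hs0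
    have c5 : (0:ℝ) ≤ t*(1-t) := mul_nonneg ht0 (by linarith)
    have c6 : (0:ℝ) ≤ s*(1-s) := mul_nonneg hs0 (by linarith)
    linarith [mul_le_mul_of_nonneg_left m1 c1, mul_le_mul_of_nonneg_left m2 c2,
      mul_le_mul_of_nonneg_left m3 c3, mul_le_mul_of_nonneg_left m4 c4,
      mul_le_mul_of_nonneg_left m5 c5, mul_le_mul_of_nonneg_left m6 c6, key]
end

section
/- Midpoint inequality from the ⊠-inequalities (Proposition 7.1 specialization): let (X,d) be a metric space satisfying the ⊠-inequalities, and let x, y, z ∈ X with x ≠ z and d(x,z) = d(x,y) + d(y,z). Set t = d(x,y)/d(x,z). Then for every w ∈ X, d(y,w)² ≤ (1-t)·d(x,w)² + t·d(z,w)² - t(1-t)·d(x,z)². -/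
/-!
Betweenness of `y` forces `d(x,y) = t·d(x,z)` and `d(y,z) = (1-t)·d(x,z)`, and with these values the
⊠-inequality for the quadrilateral `x y z w` with weights `(t, s)` collapses to
`s · ((1-t)d(x,w)² + t d(z,w)² - t(1-t)d(x,z)² - (1-s)d(y,w)²) ≥ 0`.
Dividing by `s > 0` and letting `s → 0⁺` gives the claim.
-/

open Set Filter Topology

lemma le_of_forall_one_sub_mul_le {a b : ℝ} (h : ∀ s ∈ Ioc (0 : ℝ) 1, (1 - s) * a ≤ b) :
    a ≤ b := by
  have hlim : Tendsto (fun s : ℝ ↦ (1 - s) * a) (𝓝[>] 0) (𝓝 a) := by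
    have : Tendsto (fun s : ℝ ↦ (1 - s) * a) (𝓝 0) (𝓝 ((1 - 0) * a)) :=
      ((continuous_const.sub continuous_id).mul continuous_const).tendsto 0
    simpa using this.mono_left nhdsWithin_le_nhds
  exact le_of_tendsto hlim (eventually_of_mem (Ioc_mem_nhdsGT zero_lt_one) h)

theorem BoxtimesIneq.one_sub_mul_dist_sq_le {X : Type*} [MetricSpace X] (hX : BoxtimesIneq X)
    {x y z w : X} {t s : ℝ} (ht : t ∈ Icc (0 : ℝ) 1) (hs : s ∈ Ioc (0 : ℝ) 1)
    (hxy : dist x y = t * dist x z) (hyz : dist y z = (1 - t) * dist x z) :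
    (1 - s) * dist y w ^ 2
      ≤ (1 - t) * dist x w ^ 2 + t * dist z w ^ 2 - t * (1 - t) * dist x z ^ 2 := by
  have key := hX t s ht ⟨hs.1.le, hs.2⟩ x y z w
  rw [hxy, hyz, dist_comm w x] at key
  have hprod : 0 ≤ s * ((1 - t) * dist x w ^ 2 + t * dist z w ^ 2 - t * (1 - t) * dist x z ^ 2
      - (1 - s) * dist y w ^ 2) := by
    linear_combination key
  exact sub_nonneg.1 (nonneg_of_mul_nonneg_right hprod hs.1)

theorem stmt_15 {X : Type*} [MetricSpace X] (hX : BoxtimesIneq X)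
    (x y z : X) (hxz : x ≠ z) (hbtw : dist x z = dist x y + dist y z)
    (t : ℝ) (ht : t = dist x y / dist x z) :
    ∀ w : X, dist y w ^ 2 ≤ (1 - t) * dist x w ^ 2 + t * dist z w ^ 2
      - t * (1 - t) * dist x z ^ 2 := by
  intro w
  have hD : 0 < dist x z := dist_pos.2 hxz
  have hxy : dist x y = t * dist x z := by rw [ht, div_mul_cancel₀ _ hD.ne']
  have hyz : dist y z = (1 - t) * dist x z := by linear_combination -hbtw - hxy
  have ht01 : t ∈ Icc (0 : ℝ) 1 := by
    rw [ht]
    exact ⟨by positivity, div_le_one_of_le₀ (by linarith [dist_nonneg (x := y) (y := z)]) hD.le⟩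
  exact le_of_forall_one_sub_mul_le fun s hs ↦ hX.one_sub_mul_dist_sq_le ht01 hs hxy hyz
end

section
/- Euclidean case of Lemma 5.2 (strengthened quadruple inequality): let (X, d) be a metric space satisfying the 0-quadruple condition. Suppose x, y, z, w ∈ X and x', y', z', w' ∈ ℝ² satisfy d(x,y) ≤ ‖x'-y'‖, d(y,z) ≤ ‖y'-z'‖, d(z,w) ≤ ‖z'-w'‖, d(w,x) ≤ ‖w'-x'‖, and ‖x'-z'‖ ≤ d(x,z). Then d(y,w) ≤ ‖y'-p‖ + ‖p-w'‖ for every point p on the segment [x', z']. -/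
noncomputable def pt (a b : ℝ) : EuclideanSpace ℝ (Fin 2) :=
  (WithLp.equiv 2 (Fin 2 → ℝ)).symm ![a, b]

lemma pt_norm (a b : ℝ) : ‖pt a b‖ = Real.sqrt (a^2 + b^2) := by
  simp [pt, EuclideanSpace.norm_eq, Fin.sum_univ_two, sq_abs]

lemma pt_sub (a b c d : ℝ) : pt a b - pt c d = pt (a-c) (b-d) := by
  ext i; fin_cases i <;> simp [pt]

lemma pt_smul (r a b : ℝ) : r • pt a b = pt (r*a) (r*b) := by
  ext i; fin_cases i <;> simp [pt]

lemma pt_add (a b c d : ℝ) : pt a b + pt c d = pt (a+c) (b+d) := by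
  ext i; fin_cases i <;> simp [pt]

lemma pt_norm_eq {a b c : ℝ} (hc : 0 ≤ c) (h : a^2 + b^2 = c^2) : ‖pt a b‖ = c := by
  rw [pt_norm, h, Real.sqrt_sq hc]

lemma le_of_sq_le_sq' {a b : ℝ} (hb : 0 ≤ b) (h : a^2 ≤ b^2) : a ≤ b := by
  nlinarith [sq_nonneg (a - b), sq_nonneg (a + b)]

lemma sqrt_le_of_sq_le {a b : ℝ} (hb : 0 ≤ b) (h : a ≤ b^2) : Real.sqrt a ≤ b := by
  calc Real.sqrt a ≤ Real.sqrt (b^2) := Real.sqrt_le_sqrt h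
  _ = b := Real.sqrt_sq hb

lemma apex_sq_le {c1 c2 D : ℝ} (hD : 0 < D)
    (h1 : 0 ≤ c1 + c2 - D) (h3 : 0 ≤ D + c2 - c1) (h4 : 0 ≤ D + c1 - c2)
    (hc1 : 0 ≤ c1) (hc2 : 0 ≤ c2) :
    ((c1^2 + D^2 - c2^2)/(2*D))^2 ≤ c1^2 := by
  rw [div_pow, div_le_iff₀ (by positivity)]
  nlinarith [mul_nonneg (mul_nonneg (mul_nonneg h1 (by linarith : (0:ℝ) ≤ c1 + c2 + D)) h3) h4]

open RealInnerProductSpace in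
lemma stewart {E : Type*} [NormedAddCommGroup E] [InnerProductSpace ℝ E]
    (x y z : E) (t : ℝ) :
    ‖y - ((1-t)•x + t•z)‖^2 = (1-t)*‖y-x‖^2 + t*‖y-z‖^2 - t*(1-t)*‖x-z‖^2 := by
  have h : y - ((1-t)•x + t•z) = (1-t)•(y-x) + t•(y-z) := by module
  have h2 : x - z = (y - z) - (y - x) := by abel
  have e : ∀ v : E, ‖v‖^2 = ⟪v, v⟫ := fun v => (real_inner_self_eq_norm_sq v).symm
  rw [h, h2]
  simp only [e, inner_add_left, inner_add_right, inner_sub_left, inner_sub_right,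
    real_inner_smul_left, real_inner_smul_right, real_inner_comm (y-x) (y-z)]
  ring

lemma seg_dist {E : Type*} [NormedAddCommGroup E] [NormedSpace ℝ E] {Y W q : E}
    (hq : q ∈ segment ℝ Y W) : ‖Y - q‖ + ‖q - W‖ = ‖Y - W‖ := by
  obtain ⟨u, v, hu, hv, huv, rfl⟩ := hq
  have hu' : u = 1 - v := by linarith
  subst hu'
  have h1 : Y - ((1-v)•Y + v•W) = v • (Y - W) := by module
  have h2 : ((1-v)•Y + v•W) - W = (1-v) • (Y - W) := by module
  rw [h1, h2, norm_smul, norm_smul, Real.norm_eq_abs, Real.norm_eq_abs,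
    abs_of_nonneg hv, abs_of_nonneg (by linarith : (0:ℝ) ≤ 1 - v)]
  ring

lemma relay {E : Type*} [NormedAddCommGroup E] [NormedSpace ℝ E] {Y W q P Q : E}
    (hq : q ∈ segment ℝ Y W) (hQ : Q ∈ segment ℝ q P) :
    ‖Y - Q‖ + ‖Q - W‖ ≤ ‖Y - P‖ + ‖P - W‖ := by
  obtain ⟨a, b, ha, hb, hab, rfl⟩ := hQ
  have ha' : a = 1 - b := by linarith
  subst ha'
  have h1 : Y - ((1-b)•q + b•P) = (1-b)•(Y - q) + b•(Y - P) := by module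
  have h2 : ((1-b)•q + b•P) - W = (1-b)•(q - W) + b•(P - W) := by module
  have hYW : ‖Y - q‖ + ‖q - W‖ = ‖Y - W‖ := seg_dist hq
  have hW : ‖Y - W‖ ≤ ‖Y - P‖ + ‖P - W‖ := by
    calc ‖Y - W‖ = ‖(Y - P) + (P - W)‖ := by abel_nf
    _ ≤ ‖Y - P‖ + ‖P - W‖ := norm_add_le _ _
  have n1 : ‖Y - ((1-b)•q + b•P)‖ ≤ (1-b)*‖Y - q‖ + b*‖Y - P‖ := by
    rw [h1]
    refine (norm_add_le _ _).trans ?_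
    rw [norm_smul, norm_smul, Real.norm_eq_abs, Real.norm_eq_abs,
      abs_of_nonneg hb, abs_of_nonneg (by linarith : (0:ℝ) ≤ 1 - b)]
  have n2 : ‖((1-b)•q + b•P) - W‖ ≤ (1-b)*‖q - W‖ + b*‖P - W‖ := by
    rw [h2]
    refine (norm_add_le _ _).trans ?_
    rw [norm_smul, norm_smul, Real.norm_eq_abs, Real.norm_eq_abs,
      abs_of_nonneg hb, abs_of_nonneg (by linarith : (0:ℝ) ≤ 1 - b)]
  nlinarith [norm_nonneg (Y - P), norm_nonneg (P - W)]

/-- The 0-quadruple condition for a metric space. -/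
def ZeroQuadruple (X : Type*) [MetricSpace X] : Prop :=
  ∀ (x y z w : X) (x' y' z' w' : EuclideanSpace ℝ (Fin 2)),
    (segment ℝ x' z' ∩ segment ℝ y' w').Nonempty →
    dist x y = ‖x' - y'‖ → dist y z = ‖y' - z'‖ → dist z w = ‖z' - w'‖ →
    dist w x = ‖w' - x'‖ → dist x z = ‖x' - z'‖ →
    dist y w ≤ ‖y' - w'‖

set_option maxHeartbeats 1000000 in
theorem stmt_16 {X : Type*} [MetricSpace X] (hX : ZeroQuadruple X)
    (x y z w : X) (x' y' z' w' : EuclideanSpace ℝ (Fin 2))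
    (h1 : dist x y ≤ ‖x' - y'‖) (h2 : dist y z ≤ ‖y' - z'‖)
    (h3 : dist z w ≤ ‖z' - w'‖) (h4 : dist w x ≤ ‖w' - x'‖)
    (h5 : ‖x' - z'‖ ≤ dist x z) :
    ∀ p ∈ segment ℝ x' z', dist y w ≤ ‖y' - p‖ + ‖p - w'‖ := by
  intro p hp
  obtain ⟨u, t, hu, ht, hut, hp⟩ := hp
  have hu' : u = 1 - t := by linarith
  subst hu'
  subst hp
  have ht1 : t ≤ 1 := by linarith
  set c1 := dist x y with hc1
  set c2 := dist y z with hc2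
  set e2 := dist z w with he2
  set e1 := dist w x with he1
  set D := dist x z with hD
  have hc1n : 0 ≤ c1 := dist_nonneg
  have hc2n : 0 ≤ c2 := dist_nonneg
  have he1n : 0 ≤ e1 := dist_nonneg
  have he2n : 0 ≤ e2 := dist_nonneg
  have hDn : 0 ≤ D := dist_nonneg
  -- Stewart lower bounds on the two goal norms
  have sy := stewart x' y' z' t
  have sw := stewart x' w' z' t
  have a1 : c1^2 ≤ ‖y' - x'‖^2 := by
    rw [norm_sub_rev]; exact pow_le_pow_left₀ hc1n h1 2
  have a2 : c2^2 ≤ ‖y' - z'‖^2 := pow_le_pow_left₀ hc2n h2 2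
  have a3 : ‖x' - z'‖^2 ≤ D^2 := pow_le_pow_left₀ (norm_nonneg _) h5 2
  have a4 : e1^2 ≤ ‖w' - x'‖^2 := pow_le_pow_left₀ he1n h4 2
  have a5 : e2^2 ≤ ‖w' - z'‖^2 := by
    rw [norm_sub_rev]; exact pow_le_pow_left₀ he2n h3 2
  have b1 := mul_le_mul_of_nonneg_left a1 (by linarith : (0:ℝ) ≤ 1-t)
  have b2 := mul_le_mul_of_nonneg_left a2 ht
  have b3 := mul_le_mul_of_nonneg_left a3 (mul_nonneg ht (by linarith : (0:ℝ) ≤ 1-t))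
  have b4 := mul_le_mul_of_nonneg_left a4 (by linarith : (0:ℝ) ≤ 1-t)
  have b5 := mul_le_mul_of_nonneg_left a5 ht
  have hry : (1-t)*c1^2 + t*c2^2 - t*(1-t)*D^2 ≤ ‖y' - ((1-t)•x' + t•z')‖^2 := by
    linarith only [sy, b1, b2, b3]
  have hrw : (1-t)*e1^2 + t*e2^2 - t*(1-t)*D^2 ≤ ‖w' - ((1-t)•x' + t•z')‖^2 := by
    linarith only [sw, b4, b5, b3]
  have hrw' : ‖(1-t)•x' + t•z' - w'‖ = ‖w' - ((1-t)•x' + t•z')‖ := norm_sub_rev _ _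
  clear sy sw a1 a2 a3 a4 a5 b1 b2 b3 b4 b5
  rcases eq_or_lt_of_le hDn with hD0 | hDpos
  · -- degenerate case x = z
    have hxz : x = z := by rwa [← hD0, eq_comm, dist_eq_zero] at hD
    have hc2c1 : c2 = c1 := by rw [hc2, hc1, ← hxz, dist_comm]
    have he2e1 : e2 = e1 := by rw [he2, he1, hxz, dist_comm]
    have hD0' : D = 0 := hD0.symm
    rw [hc2c1, hD0'] at hry
    rw [he2e1, hD0'] at hrw
    have hyb : c1 ≤ ‖y' - ((1-t)•x' + t•z')‖ :=
      le_of_sq_le_sq' (norm_nonneg _) (by linarith only [hry])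
    have hwb : e1 ≤ ‖w' - ((1-t)•x' + t•z')‖ :=
      le_of_sq_le_sq' (norm_nonneg _) (by linarith only [hrw])
    have hyw : dist y w ≤ c1 + e1 := by
      calc dist y w ≤ dist y x + dist x w := dist_triangle _ _ _
      _ = c1 + e1 := by rw [dist_comm y x, dist_comm x w]
    rw [hrw']; linarith only [hyb, hwb, hyw]
  · -- main case D > 0
    have hDne : D ≠ 0 := ne_of_gt hDpos
    -- triangle inequalities
    have tri1 : D ≤ c1 + c2 := dist_triangle x y z
    have tri2 : c1 ≤ D + c2 := by
      calc c1 ≤ dist x z + dist z y := dist_triangle x z y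
      _ = D + c2 := by rw [dist_comm z y]
    have tri3 : c2 ≤ c1 + D := by
      calc c2 ≤ dist y x + dist x z := dist_triangle y x z
      _ = c1 + D := by rw [dist_comm y x]
    have tri1w : D ≤ e1 + e2 := by
      calc D ≤ dist x w + dist w z := dist_triangle x w z
      _ = e1 + e2 := by rw [dist_comm x w, dist_comm w z]
    have tri2w : e1 ≤ D + e2 := by
      calc e1 ≤ dist w z + dist z x := dist_triangle w z x
      _ = e2 + D := by rw [dist_comm w z, dist_comm z x]
      _ = D + e2 := by ring
    have tri3w : e2 ≤ e1 + D := by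
      calc e2 ≤ dist z x + dist x w := dist_triangle z x w
      _ = D + e1 := by rw [dist_comm z x, dist_comm x w]
      _ = e1 + D := by ring
    set Y1 := (c1^2 + D^2 - c2^2)/(2*D) with hY1
    set W1 := (e1^2 + D^2 - e2^2)/(2*D) with hW1
    have h2DY : 2*D*Y1 = c1^2 + D^2 - c2^2 := by rw [hY1]; field_simp
    have h2DW : 2*D*W1 = e1^2 + D^2 - e2^2 := by rw [hW1]; field_simp
    have hY1le : Y1^2 ≤ c1^2 :=
      apex_sq_le hDpos (by linarith only [tri1]) (by linarith only [tri2])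
        (by linarith only [tri3]) hc1n hc2n
    have hW1le : W1^2 ≤ e1^2 :=
      apex_sq_le hDpos (by linarith only [tri1w]) (by linarith only [tri2w])
        (by linarith only [tri3w]) he1n he2n
    set Y2 := Real.sqrt (c1^2 - Y1^2) with hY2def
    set W2 := Real.sqrt (e1^2 - W1^2) with hW2def
    have hY2n : 0 ≤ Y2 := Real.sqrt_nonneg _
    have hW2n : 0 ≤ W2 := Real.sqrt_nonneg _
    have hY2sq : Y2^2 = c1^2 - Y1^2 := Real.sq_sqrt (by linarith only [hY1le])
    have hW2sq : W2^2 = e1^2 - W1^2 := Real.sq_sqrt (by linarith only [hW1le])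
    -- exact distances of the comparison configuration
    have nXY : ‖pt 0 0 - pt Y1 Y2‖ = c1 := by
      rw [pt_sub]; exact pt_norm_eq hc1n (by linear_combination hY2sq)
    have nYZ : ‖pt Y1 Y2 - pt D 0‖ = c2 := by
      rw [pt_sub]; exact pt_norm_eq hc2n (by linear_combination hY2sq - h2DY)
    have nZW : ‖pt D 0 - pt W1 (-W2)‖ = e2 := by
      rw [pt_sub]; exact pt_norm_eq he2n (by linear_combination hW2sq - h2DW)
    have nWX : ‖pt W1 (-W2) - pt 0 0‖ = e1 := by
      rw [pt_sub]; exact pt_norm_eq he1n (by linear_combination hW2sq)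
    have nXZ : ‖pt 0 0 - pt D 0‖ = D := by
      rw [pt_sub]; exact pt_norm_eq hDn (by ring)
    -- bounds through the comparison point P = (t*D, 0)
    have hYP : ‖pt Y1 Y2 - pt (t*D) 0‖ ≤ ‖y' - ((1-t)•x' + t•z')‖ := by
      rw [pt_sub, pt_norm]
      refine sqrt_le_of_sq_le (norm_nonneg _) ?_
      have e : (Y1 - t*D)^2 + (Y2 - 0)^2 = (1-t)*c1^2 + t*c2^2 - t*(1-t)*D^2 := by
        linear_combination hY2sq - t*h2DY
      rw [e]; exact hry
    have hPW : ‖pt (t*D) 0 - pt W1 (-W2)‖ ≤ ‖(1-t)•x' + t•z' - w'‖ := by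
      rw [hrw', pt_sub, pt_norm]
      refine sqrt_le_of_sq_le (norm_nonneg _) ?_
      have e : (t*D - W1)^2 + (0 - -W2)^2 = (1-t)*e1^2 + t*e2^2 - t*(1-t)*D^2 := by
        linear_combination hW2sq - t*h2DW
      rw [e]; exact hrw
    have htD0 : 0 ≤ t*D := mul_nonneg ht hDn
    have htDD : t*D ≤ D := by
      have := mul_le_mul_of_nonneg_right ht1 hDn
      linarith only [this]
    -- crossing point of segment [Y,W] with the axis
    obtain ⟨q1, hq1seg⟩ : ∃ q1 : ℝ, pt q1 0 ∈ segment ℝ (pt Y1 Y2) (pt W1 (-W2)) := by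
      by_cases hh : Y2 + W2 = 0
      · refine ⟨Y1, ?_⟩
        have hz : Y2 = 0 := by linarith only [hh, hY2n, hW2n]
        rw [hz]
        exact left_mem_segment _ _ _
      · have hpos : 0 < Y2 + W2 := lt_of_le_of_ne (by linarith only [hY2n, hW2n]) (Ne.symm hh)
        refine ⟨(1 - Y2/(Y2+W2))*Y1 + (Y2/(Y2+W2))*W1,
          ⟨1 - Y2/(Y2+W2), Y2/(Y2+W2), ?_, by positivity, by ring, ?_⟩⟩
        · have : Y2/(Y2+W2) ≤ 1 := by rw [div_le_one hpos]; linarith only [hW2n]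
          linarith only [this]
        · rw [pt_smul, pt_smul, pt_add]
          have hz2 : (1 - Y2/(Y2+W2))*Y2 + (Y2/(Y2+W2))*(-W2) = 0 := by
            field_simp; ring
          rw [hz2]
    rcases lt_or_ge q1 0 with hq | hq
    · -- crossing left of the base: relay through X'' = (0,0)
      have hQmem : pt 0 0 ∈ segment ℝ (pt q1 0) (pt (t*D) 0) := by
        refine ⟨(t*D)/(t*D - q1), (-q1)/(t*D - q1), ?_, ?_, ?_, ?_⟩
        · apply div_nonneg htD0; linarith only [htD0, hq]
        · apply div_nonneg (by linarith only [hq]); linarith only [htD0, hq]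
        · rw [← add_div, div_eq_one_iff_eq
            (by linarith only [htD0, hq] : t*D - q1 ≠ 0)]
          ring
        · rw [pt_smul, pt_smul, pt_add]
          have c1' : (t*D)/(t*D - q1)*q1 + (-q1)/(t*D - q1)*(t*D) = 0 := by
            rw [div_mul_eq_mul_div, div_mul_eq_mul_div, ← add_div]
            rw [div_eq_iff (by linarith only [htD0, hq] : t*D - q1 ≠ 0)]
            ring
          have c2' : (t*D)/(t*D - q1)*0 + (-q1)/(t*D - q1)*0 = 0 := by ring
          rw [c1', c2']
      have step := relay hq1seg hQmem
      calc dist y w ≤ dist y x + dist x w := dist_triangle _ _ _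
        _ = c1 + e1 := by rw [dist_comm y x, dist_comm x w]
        _ = ‖pt Y1 Y2 - pt 0 0‖ + ‖pt 0 0 - pt W1 (-W2)‖ := by
            rw [norm_sub_rev, nXY, norm_sub_rev (pt 0 0), nWX]
        _ ≤ ‖pt Y1 Y2 - pt (t*D) 0‖ + ‖pt (t*D) 0 - pt W1 (-W2)‖ := step
        _ ≤ _ := add_le_add hYP hPW
    · rcases le_or_gt q1 D with hq2 | hq2
      · -- crossing inside the base: apply the quadruple condition
        have hmem : pt q1 0 ∈ segment ℝ (pt 0 0) (pt D 0) := by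
          refine ⟨1 - q1/D, q1/D, ?_, by positivity, by ring, ?_⟩
          · have : q1/D ≤ 1 := by rw [div_le_one hDpos]; exact hq2
            linarith only [this]
          · rw [pt_smul, pt_smul, pt_add]
            have c1' : (1 - q1/D)*0 + q1/D*D = q1 := by field_simp; ring
            have c2' : (1 - q1/D)*0 + q1/D*0 = 0 := by ring
            rw [c1', c2']
        have hd := hX x y z w (pt 0 0) (pt Y1 Y2) (pt D 0) (pt W1 (-W2))
          ⟨pt q1 0, hmem, hq1seg⟩ nXY.symm nYZ.symm nZW.symm nWX.symm nXZ.symm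
        have htri : ‖pt Y1 Y2 - pt W1 (-W2)‖ ≤
            ‖pt Y1 Y2 - pt (t*D) 0‖ + ‖pt (t*D) 0 - pt W1 (-W2)‖ := by
          calc ‖pt Y1 Y2 - pt W1 (-W2)‖
              = ‖(pt Y1 Y2 - pt (t*D) 0) + (pt (t*D) 0 - pt W1 (-W2))‖ := by abel_nf
            _ ≤ _ := norm_add_le _ _
        calc dist y w ≤ ‖pt Y1 Y2 - pt W1 (-W2)‖ := hd
          _ ≤ ‖pt Y1 Y2 - pt (t*D) 0‖ + ‖pt (t*D) 0 - pt W1 (-W2)‖ := htri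
          _ ≤ _ := add_le_add hYP hPW
      · -- crossing right of the base: relay through Z'' = (D,0)
        have hQmem : pt D 0 ∈ segment ℝ (pt q1 0) (pt (t*D) 0) := by
          refine ⟨(D - t*D)/(q1 - t*D), (q1 - D)/(q1 - t*D), ?_, ?_, ?_, ?_⟩
          · apply div_nonneg (by linarith only [htDD]); linarith only [hq2, htDD]
          · apply div_nonneg (by linarith only [hq2]); linarith only [hq2, htDD]
          · rw [← add_div, div_eq_one_iff_eq (by linarith only [hq2, htDD] : q1 - t*D ≠ 0)]
            ring
          · rw [pt_smul, pt_smul, pt_add]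
            have c1' : (D - t*D)/(q1 - t*D)*q1 + (q1 - D)/(q1 - t*D)*(t*D) = D := by
              rw [div_mul_eq_mul_div, div_mul_eq_mul_div, ← add_div,
                div_eq_iff (by linarith only [hq2, htDD] : q1 - t*D ≠ 0)]
              ring
            have c2' : (D - t*D)/(q1 - t*D)*0 + (q1 - D)/(q1 - t*D)*0 = 0 := by ring
            rw [c1', c2']
        have step := relay hq1seg hQmem
        calc dist y w ≤ dist y z + dist z w := dist_triangle _ _ _
          _ = c2 + e2 := rfl
          _ = ‖pt Y1 Y2 - pt D 0‖ + ‖pt D 0 - pt W1 (-W2)‖ := by rw [nYZ, nZW]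
          _ ≤ ‖pt Y1 Y2 - pt (t*D) 0‖ + ‖pt (t*D) 0 - pt W1 (-W2)‖ := step
          _ ≤ _ := add_le_add hYP hPW
end
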